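/- arXiv:1802.06021 — 6 statements merged into one kernel-verified Lean document; each statement's English description precedes it below -/
import Mathlib

section
/- Let a, b ≥ 1 and k ≥ 1. If the a-cube Q_a contains k pairwise edge-disjoint symmetric chain decompositions and the b-cube Q_b contains k pairwise edge-disjoint symmetric chain decompositions, then the (a+b)-cube Q_{a+b} contains k pairwise edge-disjoint symmetric chain decompositions. -/
/-- The Hamming weight of a bitstring of length `n`, i.e., its number of 1-bits. -/
def wt {n : ℕ} (x : Fin n → Bool) : ℕ := (Finset.univ.filter fun i => x i = true).card

/-- The `n`-dimensional hypercube: vertices are bitstrings of length `n`, two of which are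
adjacent iff they differ in exactly one position. -/
def cube (n : ℕ) : SimpleGraph (Fin n → Bool) where
  Adj x y := hammingDist x y = 1
  symm := by constructor; intro x y h; rwa [hammingDist_comm]
  loopless := by constructor; intro x h; simp [hammingDist_self] at h
/-- A symmetric chain in the `n`-cube: a path `(x_k, x_{k+1}, …, x_{n−k})` in `cube n`
where `x_i` has Hamming weight `i` for each `k ≤ i ≤ n − k`. -/
def IsSymChain (n : ℕ) (c : List (Fin n → Bool)) : Prop :=
  c ≠ [] ∧ c.Chain' (cube n).Adj ∧
  ∃ k : ℕ, (∀ (i : ℕ) (h : i < c.length), wt (c.get ⟨i, h⟩) = k + i) ∧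
    2 * k + (c.length - 1) = n

/-- A symmetric chain decomposition of the `n`-cube: a collection of symmetric chains
whose vertex sets partition the vertex set. -/
def IsSCD (n : ℕ) (D : Set (List (Fin n → Bool))) : Prop :=
  (∀ c ∈ D, IsSymChain n c) ∧ ∀ x : Fin n → Bool, ∃! c, c ∈ D ∧ x ∈ c

/-- The edges lying on a chain, i.e., the unordered pairs of consecutive entries. -/
def chainEdges {V : Type*} (c : List V) : Set (Sym2 V) :=
  {e | ∃ (i : ℕ) (h : i + 1 < c.length),
    e = s(c.get ⟨i, Nat.lt_of_succ_lt h⟩, c.get ⟨i + 1, h⟩)}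

/-- All edges lying on some chain of the collection `D`. -/
def scdEdges {n : ℕ} (D : Set (List (Fin n → Bool))) : Set (Sym2 (Fin n → Bool)) :=
  ⋃ c ∈ D, chainEdges c

/-- Two chain decompositions are edge-disjoint if no edge lies on a chain of one
and also on a chain of the other. -/
def EdgeDisjointSCD {n : ℕ} (D D' : Set (List (Fin n → Bool))) : Prop :=
  Disjoint (scdEdges D) (scdEdges D')
/-! ### auxiliary lemmas -/

lemma card_filter_eq_sum' {n : ℕ} (p : Fin n → Prop) [DecidablePred p] :
    (Finset.univ.filter p).card = ∑ i : Fin n, if p i then 1 else 0 := by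
  rw [Finset.card_filter]

lemma wt_append' {a b : ℕ} (x : Fin a → Bool) (y : Fin b → Bool) :
    wt (Fin.append x y) = wt x + wt y := by
  unfold wt
  rw [card_filter_eq_sum', card_filter_eq_sum', card_filter_eq_sum', Fin.sum_univ_add]
  simp [Fin.append_left, Fin.append_right]

lemma hammingDist_append' {a b : ℕ} (x x' : Fin a → Bool) (y y' : Fin b → Bool) :
    hammingDist (Fin.append x y) (Fin.append x' y') = hammingDist x x' + hammingDist y y' := by
  show (Finset.univ.filter fun i => Fin.append x y i ≠ Fin.append x' y' i).card
      = (Finset.univ.filter fun i => x i ≠ x' i).card + (Finset.univ.filter fun i => y i ≠ y' i).card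
  rw [card_filter_eq_sum', card_filter_eq_sum', card_filter_eq_sum', Fin.sum_univ_add]
  simp [Fin.append_left, Fin.append_right]

lemma append_inj' {a b : ℕ} {x x' : Fin a → Bool} {y y' : Fin b → Bool}
    (h : Fin.append x y = Fin.append x' y') : x = x' ∧ y = y' := by
  constructor
  · funext i; simpa [Fin.append_left] using congrFun h (Fin.castAdd b i)
  · funext i; simpa [Fin.append_right] using congrFun h (Fin.natAdd a i)

lemma append_split' {a b : ℕ} (z : Fin (a+b) → Bool) :
    z = Fin.append (fun i => z (Fin.castAdd b i)) (fun i => z (Fin.natAdd a i)) := by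
  funext i
  refine Fin.addCases (fun i => ?_) (fun i => ?_) i <;> simp [Fin.append_left, Fin.append_right]

lemma symChain_adj' {n : ℕ} {c : List (Fin n → Bool)} (h : IsSymChain n c)
    (i : ℕ) (hi : i + 1 < c.length) :
    hammingDist (c.get ⟨i, by omega⟩) (c.get ⟨i+1, hi⟩) = 1 := by
  have := List.isChain_iff_getElem.mp h.2.1 i (by omega)
  simpa [cube, List.get_eq_getElem] using this

lemma symChain_length_pos {n : ℕ} {c : List (Fin n → Bool)} (h : IsSymChain n c) :
    0 < c.length := List.length_pos_iff.mpr h.1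

lemma symChain_get_inj {n : ℕ} {c : List (Fin n → Bool)} {k : ℕ}
    (hw : ∀ (i : ℕ) (h : i < c.length), wt (c.get ⟨i, h⟩) = k + i)
    {i j : ℕ} (hi : i < c.length) (hj : j < c.length)
    (h : c.get ⟨i, hi⟩ = c.get ⟨j, hj⟩) : i = j := by
  have h1 := hw i hi
  have h2 := hw j hj
  rw [h] at h1
  omega

lemma get_congr {α : Type*} (l : List α) {i j : ℕ} (hi : i < l.length) (hj : j < l.length)
    (hij : i = j) : l.get ⟨i, hi⟩ = l.get ⟨j, hj⟩ := by subst hij; rfl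

/-! ### the hook construction -/

def gD {n : ℕ} (l : List (Fin n → Bool)) (i : ℕ) : Fin n → Bool := l.getD i (fun _ => false)

lemma gD_eq {n : ℕ} (l : List (Fin n → Bool)) {i : ℕ} (h : i < l.length) :
    gD l i = l.get ⟨i, h⟩ := by
  show l.getD i _ = _
  rw [List.getD_eq_getElem _ _ h, List.get_eq_getElem]

def hook {a b : ℕ} (c : List (Fin a → Bool)) (d : List (Fin b → Bool)) (t : ℕ) :
    List (Fin (a+b) → Bool) :=
  ((List.range (d.length - t)).map fun j => Fin.append (gD c t) (gD d j)) ++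
  ((List.range (c.length - 1 - t)).map fun i =>
      Fin.append (gD c (t+1+i)) (gD d (d.length - 1 - t)))

lemma hook_length {a b : ℕ} (c : List (Fin a → Bool)) (d : List (Fin b → Bool)) (t : ℕ) :
    (hook c d t).length = (d.length - t) + (c.length - 1 - t) := by
  simp [hook]

lemma hook_getElem {a b : ℕ} (c : List (Fin a → Bool)) (d : List (Fin b → Bool)) (t : ℕ)
    (l : ℕ) (h : l < (hook c d t).length) :
    (hook c d t)[l] = if l < d.length - t then Fin.append (gD c t) (gD d l)
      else Fin.append (gD c (t+1+(l - (d.length - t)))) (gD d (d.length - 1 - t)) := by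
  rw [hook_length] at h
  simp only [hook, List.getElem_append]
  by_cases hl : l < d.length - t
  · simp [hl]
  · simp [hl]

lemma hook_get {a b : ℕ} (c : List (Fin a → Bool)) (d : List (Fin b → Bool)) (t : ℕ)
    (l : ℕ) (h : l < (hook c d t).length) :
    (hook c d t).get ⟨l, h⟩ = if l < d.length - t then Fin.append (gD c t) (gD d l)
      else Fin.append (gD c (t+1+(l - (d.length - t)))) (gD d (d.length - 1 - t)) := by
  rw [List.get_eq_getElem, hook_getElem]

section Hook

variable {a b : ℕ} {c : List (Fin a → Bool)} {d : List (Fin b → Bool)} {kA kB t : ℕ}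
  (hc : IsSymChain a c) (hd : IsSymChain b d)
  (hwc : ∀ (i : ℕ) (h : i < c.length), wt (c.get ⟨i, h⟩) = kA + i)
  (hwd : ∀ (j : ℕ) (h : j < d.length), wt (d.get ⟨j, h⟩) = kB + j)
  (ht1 : t ≤ c.length - 1) (ht2 : t ≤ d.length - 1)

include hc hd hwc hwd ht1 ht2

lemma hook_isSymChain (hkc : 2 * kA + (c.length - 1) = a) (hkd : 2 * kB + (d.length - 1) = b) :
    IsSymChain (a + b) (hook c d t) := by
  have hp : 0 < c.length := symChain_length_pos hc
  have hq : 0 < d.length := symChain_length_pos hd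
  refine ⟨?_, ?_, kA + kB + t, ?_, ?_⟩
  · intro hnil
    have := congrArg List.length hnil
    rw [hook_length] at this
    simp at this
    omega
  · rw [List.Chain', List.isChain_iff_getElem]
    intro i hi
    rw [hook_length] at hi
    show hammingDist _ _ = 1
    rw [hook_getElem, hook_getElem]
    by_cases h1 : i + 1 < d.length - t
    · rw [if_pos (by omega), if_pos h1]
      rw [gD_eq c (show t < c.length by omega), gD_eq d (show i < d.length by omega),
        gD_eq d (show i + 1 < d.length by omega)]
      rw [hammingDist_append', hammingDist_self, symChain_adj' hd i (by omega)]
    · by_cases h0 : i < d.length - t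
      · -- junction: i + 1 = d.length - t
        rw [if_pos h0, if_neg (by omega)]
        have e1 : i + 1 - (d.length - t) = 0 := by omega
        have e2 : i = d.length - 1 - t := by omega
        rw [e1, e2]
        simp only [Nat.add_zero]
        rw [gD_eq c (show t < c.length by omega),
          gD_eq c (show t + 1 < c.length by omega),
          gD_eq d (show d.length - 1 - t < d.length by omega)]
        rw [hammingDist_append', hammingDist_self]
        have := symChain_adj' hc t (show t + 1 < c.length by omega)
        omega
      · rw [if_neg h0, if_neg (by omega)]
        have e1 : t + 1 + (i + 1 - (d.length - t)) = (t + 1 + (i - (d.length - t))) + 1 := by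
          omega
        rw [e1]
        rw [gD_eq c (show t + 1 + (i - (d.length - t)) < c.length by omega),
          gD_eq c (show t + 1 + (i - (d.length - t)) + 1 < c.length by omega),
          gD_eq d (show d.length - 1 - t < d.length by omega)]
        rw [hammingDist_append', hammingDist_self]
        have := symChain_adj' hc (t + 1 + (i - (d.length - t)))
          (show t + 1 + (i - (d.length - t)) + 1 < c.length by omega)
        omega
  · intro l hl
    rw [hook_length] at hl
    rw [hook_get]
    by_cases h0 : l < d.length - t
    · rw [if_pos h0]
      rw [gD_eq c (show t < c.length by omega), gD_eq d (show l < d.length by omega)]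
      rw [wt_append', hwc t (by omega), hwd l (by omega)]
      omega
    · rw [if_neg h0]
      rw [gD_eq c (show t + 1 + (l - (d.length - t)) < c.length by omega),
        gD_eq d (show d.length - 1 - t < d.length by omega)]
      rw [wt_append', hwc _ (by omega), hwd _ (by omega)]
      omega
  · rw [hook_length]
    omega

lemma hook_mem (x : Fin (a+b) → Bool) :
    x ∈ hook c d t ↔ ∃ (i j : ℕ) (hi : i < c.length) (hj : j < d.length),
      x = Fin.append (c.get ⟨i, hi⟩) (d.get ⟨j, hj⟩) ∧
      ((i = t ∧ j ≤ d.length - 1 - t) ∨ (j = d.length - 1 - t ∧ t ≤ i)) := by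
  have hp : 0 < c.length := symChain_length_pos hc
  have hq : 0 < d.length := symChain_length_pos hd
  constructor
  · intro hx
    obtain ⟨⟨l, hl⟩, hget⟩ := List.mem_iff_get.mp hx
    rw [hook_get] at hget
    rw [hook_length] at hl
    by_cases h0 : l < d.length - t
    · rw [if_pos h0] at hget
      refine ⟨t, l, by omega, by omega, ?_, Or.inl ⟨rfl, by omega⟩⟩
      rw [← hget, gD_eq c (show t < c.length by omega), gD_eq d (show l < d.length by omega)]
    · rw [if_neg h0] at hget
      refine ⟨t + 1 + (l - (d.length - t)), d.length - 1 - t, by omega, by omega, ?_,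
        Or.inr ⟨rfl, by omega⟩⟩
      rw [← hget, gD_eq c (show t + 1 + (l - (d.length - t)) < c.length by omega),
        gD_eq d (show d.length - 1 - t < d.length by omega)]
  · rintro ⟨i, j, hi, hj, hx, hcase⟩
    rw [List.mem_iff_get]
    by_cases hit : i = t
    · have hj2 : j ≤ d.length - 1 - t := by rcases hcase with ⟨h1, h2⟩ | ⟨h1, h2⟩ <;> omega
      refine ⟨⟨j, by rw [hook_length]; omega⟩, ?_⟩
      rw [hook_get, if_pos (show j < d.length - t by omega),
        gD_eq c (show t < c.length by omega),
        gD_eq d hj, hx, get_congr c (by omega) hi hit.symm]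
    · have hjt : j = d.length - 1 - t ∧ t < i := by
        rcases hcase with ⟨h1, h2⟩ | ⟨h1, h2⟩ <;> omega
      obtain ⟨hjt, hi2⟩ := hjt
      refine ⟨⟨(d.length - t) + (i - t - 1), by rw [hook_length]; omega⟩, ?_⟩
      rw [hook_get, if_neg (show ¬ ((d.length - t) + (i - t - 1) < d.length - t) by omega)]
      have e1 : t + 1 + ((d.length - t) + (i - t - 1) - (d.length - t)) = i := by omega
      rw [e1, gD_eq c hi, gD_eq d (show d.length - 1 - t < d.length by omega), hx,
        get_congr d (by omega) hj hjt.symm]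

lemma hook_edge {e : Sym2 (Fin (a+b) → Bool)} (he : e ∈ chainEdges (hook c d t)) :
    (∃ (u : Fin a → Bool) (v v' : Fin b → Bool),
       e = s(Fin.append u v, Fin.append u v') ∧ s(v, v') ∈ chainEdges d ∧ v ≠ v') ∨
    (∃ (u u' : Fin a → Bool) (v : Fin b → Bool),
       e = s(Fin.append u v, Fin.append u' v) ∧ s(u, u') ∈ chainEdges c ∧ u ≠ u') := by
  have hp : 0 < c.length := symChain_length_pos hc
  have hq : 0 < d.length := symChain_length_pos hd
  obtain ⟨i, hi, rfl⟩ := he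
  have hi' := hi
  rw [hook_length] at hi'
  rw [hook_get, hook_get]
  by_cases h1 : i + 1 < d.length - t
  · left
    rw [if_pos (by omega), if_pos h1]
    rw [gD_eq c (show t < c.length by omega), gD_eq d (show i < d.length by omega),
      gD_eq d (show i + 1 < d.length by omega)]
    refine ⟨_, _, _, rfl, ⟨i, by omega, rfl⟩, ?_⟩
    intro hvv
    have := symChain_adj' hd i (show i + 1 < d.length by omega)
    rw [hvv, hammingDist_self] at this
    omega
  · by_cases h0 : i < d.length - t
    · right
      rw [if_pos h0, if_neg (by omega)]
      have e1 : i + 1 - (d.length - t) = 0 := by omega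
      have e2 : i = d.length - 1 - t := by omega
      rw [e1, e2]
      simp only [Nat.add_zero]
      rw [gD_eq c (show t < c.length by omega), gD_eq c (show t + 1 < c.length by omega),
        gD_eq d (show d.length - 1 - t < d.length by omega)]
      refine ⟨_, _, _, rfl, ⟨t, by omega, rfl⟩, ?_⟩
      intro huu
      have := symChain_adj' hc t (show t + 1 < c.length by omega)
      rw [huu, hammingDist_self] at this
      omega
    · right
      rw [if_neg h0, if_neg (by omega)]
      have e1 : t + 1 + (i + 1 - (d.length - t)) = (t + 1 + (i - (d.length - t))) + 1 := by
        omega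
      rw [e1]
      rw [gD_eq c (show t + 1 + (i - (d.length - t)) < c.length by omega),
        gD_eq c (show t + 1 + (i - (d.length - t)) + 1 < c.length by omega),
        gD_eq d (show d.length - 1 - t < d.length by omega)]
      refine ⟨_, _, _, rfl, ⟨t + 1 + (i - (d.length - t)), by omega, rfl⟩, ?_⟩
      intro huu
      have := symChain_adj' hc (t + 1 + (i - (d.length - t)))
        (show t + 1 + (i - (d.length - t)) + 1 < c.length by omega)
      rw [huu, hammingDist_self] at this
      omega

end Hook

/-! ### the product SCD -/

def Dprod {a b : ℕ} (DA : Set (List (Fin a → Bool))) (DB : Set (List (Fin b → Bool))) :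
    Set (List (Fin (a+b) → Bool)) :=
  {l | ∃ c ∈ DA, ∃ d ∈ DB, ∃ t : ℕ, t ≤ c.length - 1 ∧ t ≤ d.length - 1 ∧ l = hook c d t}

lemma chainEdges_subset_scdEdges {n : ℕ} {D : Set (List (Fin n → Bool))}
    {c : List (Fin n → Bool)} (hc : c ∈ D) : chainEdges c ⊆ scdEdges D := by
  intro e he
  exact Set.mem_biUnion hc he

lemma Dprod_isSCD {a b : ℕ} {DA : Set (List (Fin a → Bool))} {DB : Set (List (Fin b → Bool))}
    (hA : IsSCD a DA) (hB : IsSCD b DB) : IsSCD (a + b) (Dprod DA DB) := by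
  constructor
  · rintro l ⟨c, hcD, d, hdD, t, ht1, ht2, rfl⟩
    obtain ⟨_, _, kA, hwc, hkc⟩ := hA.1 c hcD
    obtain ⟨_, _, kB, hwd, hkd⟩ := hB.1 d hdD
    exact hook_isSymChain (hA.1 c hcD) (hB.1 d hdD) hwc hwd ht1 ht2 hkc hkd
  · intro x
    set u : Fin a → Bool := fun i => x (Fin.castAdd b i) with hu
    set v : Fin b → Bool := fun i => x (Fin.natAdd a i) with hv
    have hx : x = Fin.append u v := append_split' x
    obtain ⟨c, ⟨hcD, hcu⟩, hcuniq⟩ := hA.2 u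
    obtain ⟨d, ⟨hdD, hdv⟩, hduniq⟩ := hB.2 v
    have hcSym := hA.1 c hcD
    have hdSym := hB.1 d hdD
    obtain ⟨_, _, kA, hwc, hkc⟩ := hcSym
    obtain ⟨_, _, kB, hwd, hkd⟩ := hdSym
    have hcSym := hA.1 c hcD
    have hdSym := hB.1 d hdD
    obtain ⟨⟨i, hi⟩, hci⟩ := List.mem_iff_get.mp hcu
    obtain ⟨⟨j, hj⟩, hdj⟩ := List.mem_iff_get.mp hdv
    set t : ℕ := min i (d.length - 1 - j) with htdef
    have ht1 : t ≤ c.length - 1 := by omega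
    have ht2 : t ≤ d.length - 1 := by omega
    refine ⟨hook c d t, ⟨⟨c, hcD, d, hdD, t, ht1, ht2, rfl⟩, ?_⟩, ?_⟩
    · rw [hook_mem hcSym hdSym hwc hwd ht1 ht2]
      refine ⟨i, j, hi, hj, by rw [hci, hdj, ← hx], ?_⟩
      by_cases hij : i ≤ d.length - 1 - j
      · left; constructor <;> omega
      · right; constructor <;> omega
    · rintro l ⟨⟨c', hcD', d', hdD', t', ht1', ht2', rfl⟩, hxl⟩
      obtain ⟨_, _, kA', hwc', hkc'⟩ := hA.1 c' hcD'
      obtain ⟨_, _, kB', hwd', hkd'⟩ := hB.1 d' hdD'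
      rw [hook_mem (hA.1 c' hcD') (hB.1 d' hdD') hwc' hwd' ht1' ht2'] at hxl
      obtain ⟨i', j', hi', hj', hxeq, hcase⟩ := hxl
      rw [hx] at hxeq
      obtain ⟨hueq, hveq⟩ := append_inj' hxeq
      -- c' = c and d' = d
      have hc'c : c' = c := by
        have h1 : c' ∈ DA ∧ u ∈ c' := ⟨hcD', by rw [hueq]; exact List.get_mem _ _⟩
        have h2 : c ∈ DA ∧ u ∈ c := ⟨hcD, hcu⟩
        rw [hcuniq c' h1, hcuniq c h2]
      have hd'd : d' = d := by
        have h1 : d' ∈ DB ∧ v ∈ d' := ⟨hdD', by rw [hveq]; exact List.get_mem _ _⟩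
        have h2 : d ∈ DB ∧ v ∈ d := ⟨hdD, hdv⟩
        rw [hduniq d' h1, hduniq d h2]
      subst hc'c; subst hd'd
      -- i' = i, j' = j
      have hii : i' = i := by
        refine symChain_get_inj hwc hi' hi ?_
        rw [← hueq, hci]
      have hjj : j' = j := by
        refine symChain_get_inj hwd hj' hj ?_
        rw [← hveq, hdj]
      subst hii; subst hjj
      have : t' = t := by
        rcases hcase with ⟨h1, h2⟩ | ⟨h1, h2⟩ <;> omega
      rw [this]

lemma Dprod_edgeDisjoint {a b : ℕ}
    {DA DA' : Set (List (Fin a → Bool))} {DB DB' : Set (List (Fin b → Bool))}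
    (hA : IsSCD a DA) (hA' : IsSCD a DA') (hB : IsSCD b DB) (hB' : IsSCD b DB')
    (hdA : EdgeDisjointSCD DA DA') (hdB : EdgeDisjointSCD DB DB') :
    EdgeDisjointSCD (Dprod DA DB) (Dprod DA' DB') := by
  rw [EdgeDisjointSCD, Set.disjoint_left]
  intro e he he'
  simp only [scdEdges, Set.mem_iUnion] at he he'
  obtain ⟨l, ⟨c, hcD, d, hdD, t, ht1, ht2, rfl⟩, hel⟩ := he
  obtain ⟨l', ⟨c', hcD', d', hdD', t', ht1', ht2', rfl⟩, hel'⟩ := he'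
  obtain ⟨_, _, kA, hwc, hkc⟩ := hA.1 c hcD
  obtain ⟨_, _, kB, hwd, hkd⟩ := hB.1 d hdD
  obtain ⟨_, _, kA', hwc', hkc'⟩ := hA'.1 c' hcD'
  obtain ⟨_, _, kB', hwd', hkd'⟩ := hB'.1 d' hdD'
  have hclass := hook_edge (hA.1 c hcD) (hB.1 d hdD) hwc hwd ht1 ht2 hel
  have hclass' := hook_edge (hA'.1 c' hcD') (hB'.1 d' hdD') hwc' hwd' ht1' ht2' hel'
  rcases hclass with ⟨u, v, v', rfl, hvv, hne⟩ | ⟨u, u', v, rfl, huu, hne⟩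
  · rcases hclass' with ⟨u2, v2, v2', heq, hvv2, hne2⟩ | ⟨u2, u2', v2, heq, huu2, hne2⟩
    · -- both type B
      rw [Sym2.eq_iff] at heq
      have : s(v, v') = s(v2, v2') := by
        rcases heq with ⟨h1, h2⟩ | ⟨h1, h2⟩
        · obtain ⟨_, e1⟩ := append_inj' h1
          obtain ⟨_, e2⟩ := append_inj' h2
          rw [e1, e2]
        · obtain ⟨_, e1⟩ := append_inj' h1
          obtain ⟨_, e2⟩ := append_inj' h2
          rw [e1, e2, Sym2.eq_swap]
      exact Set.disjoint_left.mp hdB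
        (chainEdges_subset_scdEdges hdD hvv)
        (this ▸ chainEdges_subset_scdEdges hdD' hvv2)
    · -- mixed
      rw [Sym2.eq_iff] at heq
      rcases heq with ⟨h1, h2⟩ | ⟨h1, h2⟩
      · obtain ⟨_, e1⟩ := append_inj' h1
        obtain ⟨_, e2⟩ := append_inj' h2
        exact hne (e1.trans e2.symm)
      · obtain ⟨_, e1⟩ := append_inj' h1
        obtain ⟨_, e2⟩ := append_inj' h2
        exact hne (e1.trans e2.symm)
  · rcases hclass' with ⟨u2, v2, v2', heq, hvv2, hne2⟩ | ⟨u2, u2', v2, heq, huu2, hne2⟩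
    · -- mixed
      rw [Sym2.eq_iff] at heq
      rcases heq with ⟨h1, h2⟩ | ⟨h1, h2⟩
      · obtain ⟨e1, _⟩ := append_inj' h1
        obtain ⟨e2, _⟩ := append_inj' h2
        exact hne (e1.trans e2.symm)
      · obtain ⟨e1, _⟩ := append_inj' h1
        obtain ⟨e2, _⟩ := append_inj' h2
        exact hne (e1.trans e2.symm)
    · -- both type A
      rw [Sym2.eq_iff] at heq
      have : s(u, u') = s(u2, u2') := by
        rcases heq with ⟨h1, h2⟩ | ⟨h1, h2⟩
        · obtain ⟨e1, _⟩ := append_inj' h1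
          obtain ⟨e2, _⟩ := append_inj' h2
          rw [e1, e2]
        · obtain ⟨e1, _⟩ := append_inj' h1
          obtain ⟨e2, _⟩ := append_inj' h2
          rw [e1, e2, Sym2.eq_swap]
      exact Set.disjoint_left.mp hdA
        (chainEdges_subset_scdEdges hcD huu)
        (this ▸ chainEdges_subset_scdEdges hcD' huu2)


/-- If the `a`-cube and the `b`-cube each contain `k` pairwise edge-disjoint symmetric chain
decompositions, then the `(a+b)`-cube contains `k` pairwise edge-disjoint symmetric chain
decompositions. -/
theorem scd_product (a b k : ℕ) (ha : 1 ≤ a) (hb : 1 ≤ b) (hk : 1 ≤ k)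
    (hA : ∃ D : Fin k → Set (List (Fin a → Bool)),
      (∀ i, IsSCD a (D i)) ∧ ∀ i j, i ≠ j → EdgeDisjointSCD (D i) (D j))
    (hB : ∃ D : Fin k → Set (List (Fin b → Bool)),
      (∀ i, IsSCD b (D i)) ∧ ∀ i j, i ≠ j → EdgeDisjointSCD (D i) (D j)) :
    ∃ D : Fin k → Set (List (Fin (a + b) → Bool)),
      (∀ i, IsSCD (a + b) (D i)) ∧ ∀ i j, i ≠ j → EdgeDisjointSCD (D i) (D j) := by
  obtain ⟨DA, hDA, hDA'⟩ := hA
  obtain ⟨DB, hDB, hDB'⟩ := hB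
  refine ⟨fun i => Dprod (DA i) (DB i), fun i => Dprod_isSCD (hDA i) (hDB i),
    fun i j hij => Dprod_edgeDisjoint (hDA i) (hDA j) (hDB i) (hDB j)
      (hDA' i j hij) (hDB' i j hij)⟩
end

section
/- For every integer n ≥ 1, any family of pairwise edge-disjoint symmetric chain decompositions of the n-cube Q_n has at most ⌊n/2⌋ + 1 members. -/
/-- For any `n ≥ 1`, any family of pairwise edge-disjoint symmetric chain decompositions of
the `n`-cube has at most `⌊n/2⌋ + 1` members. -/
theorem edge_disjoint_SCDs_upper_bound (n m : ℕ) (hn : 1 ≤ n)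
    (D : Fin m → Set (List (Fin n → Bool)))
    (hSCD : ∀ i, IsSCD n (D i))
    (hdisj : ∀ i j, i ≠ j → EdgeDisjointSCD (D i) (D j)) :
    m ≤ n / 2 + 1 := by
  classical
  set k := (n - 1) / 2 with hk
  have hkn : k < n := by omega
  set x : Fin n → Bool := fun i => decide (i.val < k) with hxdef
  have hcount : (Finset.univ.filter fun i : Fin n => i.val < k).card = k := by
    have : (Finset.univ.filter fun i : Fin n => i.val < k) = Finset.Iio ⟨k, hkn⟩ := by
      ext i; simp [Fin.lt_def]
    rw [this, Fin.card_Iio]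
  have hwx : wt x = k := by
    unfold wt
    simp only [hxdef, decide_eq_true_eq]
    exact hcount
  -- key: for each SCD, there is a 0-bit j of x such that the edge from x to
  -- (x with bit j set) lies on a chain of that SCD
  have key : ∀ i : Fin m, ∃ j : Fin n, x j = false ∧
      s(x, Function.update x j true) ∈ scdEdges (D i) := by
    intro i
    obtain ⟨hchains, hpart⟩ := hSCD i
    obtain ⟨c, ⟨hcD, hxc⟩, -⟩ := hpart x
    obtain ⟨hne, hadj, k', hwt', hlen⟩ := hchains c hcD
    obtain ⟨⟨p, hp⟩, hget⟩ := List.mem_iff_get.mp hxc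
    have hlen1 : 1 ≤ c.length := List.length_pos_iff.mpr hne
    have hwxp : k' + p = k := by
      have := hwt' p hp
      rw [hget, hwx] at this
      omega
    have hp1 : p + 1 < c.length := by omega
    set y := c.get ⟨p + 1, hp1⟩ with hy
    have hadjxy : (cube n).Adj x y := by
      have h2 : (cube n).Adj (c.get ⟨p, hp⟩) (c.get ⟨p + 1, hp1⟩) := List.isChain_iff_getElem.mp hadj p (by omega)
      rw [hget] at h2
      exact h2
    have hd : (Finset.univ.filter fun i : Fin n => x i ≠ y i).card = 1 := hadjxy
    have hwy : wt y = k + 1 := by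
      have := hwt' (p + 1) hp1
      rw [← hy] at this
      omega
    obtain ⟨j, hj⟩ := Finset.card_eq_one.mp hd
    have hnej : x j ≠ y j := by
      have : j ∈ Finset.univ.filter fun i : Fin n => x i ≠ y i := by rw [hj]; simp
      simpa using this
    have hdiff : ∀ i, i ≠ j → x i = y i := by
      intro i hij
      by_contra h
      have : i ∈ Finset.univ.filter fun i : Fin n => x i ≠ y i := by simpa using h
      rw [hj] at this
      simp at this
      exact hij this
    have hxj : x j = false := by
      by_contra h
      have hxj' : x j = true := by simpa using h
      have hyj : y j = false := by
        cases hyj : y j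
        · rfl
        · exact absurd (hxj'.trans hyj.symm) hnej
      have hsub : (Finset.univ.filter fun i : Fin n => y i = true) ⊆
          (Finset.univ.filter fun i : Fin n => x i = true) := by
        intro i hi
        simp only [Finset.mem_filter, Finset.mem_univ, true_and] at hi ⊢
        by_cases hij : i = j
        · rw [hij] at hi; rw [hyj] at hi; exact absurd hi (by simp)
        · rw [hdiff i hij]; exact hi
      have := Finset.card_le_card hsub
      unfold wt at hwx hwy
      omega
    refine ⟨j, hxj, ?_⟩
    have hyeq : y = Function.update x j true := by
      funext i
      by_cases hij : i = j
      · subst hij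
        rw [Function.update_self]
        cases hyj : y i
        · exact absurd (hxj.trans hyj.symm) hnej
        · rfl
      · rw [Function.update_of_ne hij]
        exact (hdiff i hij).symm
    rw [← hyeq]
    apply Set.mem_biUnion hcD
    exact ⟨p, hp1, by rw [hget]⟩
  -- build injection into the 0-bits of x
  choose f hf0 hfe using key
  have hinj : Function.Injective f := by
    intro i₁ i₂ hfeq
    by_contra hne
    have hdj := hdisj i₁ i₂ hne
    exact Set.disjoint_left.mp hdj (hfe i₁) (hfeq ▸ hfe i₂)
  have hm : m ≤ (Finset.univ.filter fun j : Fin n => x j = false).card := by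
    have : (Finset.univ : Finset (Fin m)).card ≤ (Finset.univ.filter fun j : Fin n => x j = false).card := by
      apply Finset.card_le_card_of_injOn f
      · intro i _
        simp [hf0 i]
      · intro a _ b _ h
        exact hinj h
    simpa using this
  have hcard : (Finset.univ.filter fun j : Fin n => x j = false).card = n - k := by
    have heq : (Finset.univ.filter fun j : Fin n => x j = false) =
        (Finset.univ.filter fun j : Fin n => ¬ (j.val < k)) := by
      ext j
      simp [hxdef]
    have := Finset.card_filter_add_card_filter_not (s := (Finset.univ : Finset (Fin n)))
      (fun j : Fin n => j.val < k)
    rw [hcount] at this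
    simp only [Finset.card_univ, Fintype.card_fin] at this
    rw [heq]
    omega
  omega
end

section
/- Let n ≥ 1 and let D and D' be two edge-disjoint symmetric chain decompositions of Q_{2n+1}. Then for every integer ℓ with 1 ≤ ℓ ≤ n+1, there exist perfect matchings M and M' of the middle 2ℓ levels graph of Q_{2n+1} such that every edge of M lies on a chain of D, every edge of M' lies on a chain of D', M and M' share no edge, and the union M ∪ M' is a cycle factor of the middle 2ℓ levels graph. -/
/-- The vertex set of the middle `2ℓ` levels of the `(2n+1)`-cube: bitstrings with
Hamming weight in the interval `[n+1−ℓ, n+ℓ]`. -/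
def middleSet (n l : ℕ) : Set (Fin (2 * n + 1) → Bool) :=
  {x | n + 1 - l ≤ wt x ∧ wt x ≤ n + l}

/-- The middle `2ℓ` levels graph: the subgraph of the `(2n+1)`-cube induced by the vertices
with Hamming weight in `[n+1−ℓ, n+ℓ]`. -/
def middleGraph (n l : ℕ) : SimpleGraph (middleSet n l) :=
  (cube (2 * n + 1)).induce (middleSet n l)

/-- `H` is a cycle factor of `G`: a spanning subgraph in which every vertex has degree 2. -/
def IsCycleFactor {V : Type*} (G H : SimpleGraph V) : Prop :=
  H ≤ G ∧ ∀ v, (H.neighborSet v).ncard = 2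

/-- `H` is a perfect matching of `G`: a spanning subgraph in which every vertex has degree 1. -/
def IsPerfectMatchingOf {V : Type*} (G H : SimpleGraph V) : Prop :=
  H ≤ G ∧ ∀ v, (H.neighborSet v).ncard = 1
/-- The partner of `x` in the matching induced by the SCD `D` on the middle `2l` levels. -/
noncomputable def ptr (n l : ℕ) (D : Set (List (Fin (2 * n + 1) → Bool)))
    (hD : IsSCD (2 * n + 1) D) (x : Fin (2 * n + 1) → Bool) : Fin (2 * n + 1) → Bool :=
  let c := (hD.2 x).choose
  let k := wt (c.getD 0 x)
  if (wt x - max k (n + 1 - l)) % 2 = 0 then c.getD (wt x + 1 - k) x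
  else c.getD (wt x - 1 - k) x

theorem ptr_formula (n l : ℕ) (D : Set (List (Fin (2 * n + 1) → Bool)))
    (hD : IsSCD (2 * n + 1) D) (x : Fin (2 * n + 1) → Bool)
    (c : List (Fin (2 * n + 1) → Bool)) (hcD : c ∈ D) (hxc : x ∈ c)
    (k : ℕ) (hk : ∀ (i : ℕ) (h : i < c.length), wt (c.get ⟨i, h⟩) = k + i) :
    ptr n l D hD x =
      if (wt x - max k (n + 1 - l)) % 2 = 0 then c.getD (wt x + 1 - k) x
      else c.getD (wt x - 1 - k) x := by
  have hc : (hD.2 x).choose = c := ((hD.2 x).choose_spec.2 c ⟨hcD, hxc⟩).symm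
  have hlen : 0 < c.length := List.length_pos_iff.mpr (List.ne_nil_of_mem hxc)
  have hk0 : wt (c.getD 0 x) = k := by
    rw [(List.getD_eq_get c x ⟨0, hlen⟩ : c.getD 0 x = c.get ⟨0, hlen⟩), hk 0 hlen, Nat.add_zero]
  unfold ptr
  rw [hc]
  simp only [hk0]

theorem ptr_spec (n l : ℕ) (hl1 : 1 ≤ l) (hl2 : l ≤ n + 1)
    (D : Set (List (Fin (2 * n + 1) → Bool))) (hD : IsSCD (2 * n + 1) D)
    (x : Fin (2 * n + 1) → Bool) (hx : x ∈ middleSet n l) :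
    ptr n l D hD x ∈ middleSet n l ∧
    (cube (2 * n + 1)).Adj x (ptr n l D hD x) ∧
    s(x, ptr n l D hD x) ∈ scdEdges D ∧
    ptr n l D hD (ptr n l D hD x) = x := by
  obtain ⟨c, ⟨hcD, hxc⟩, -⟩ := hD.2 x
  obtain ⟨hne, hch, k, hk, hlen⟩ := hD.1 c hcD
  have hL : 0 < c.length := List.length_pos_iff.mpr hne
  obtain ⟨⟨j, hj⟩, hget⟩ := List.mem_iff_get.mp hxc
  have hwx : wt x = k + j := by rw [← hget]; exact hk j hj
  obtain ⟨hx1, hx2⟩ := hx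
  set lo := max k (n + 1 - l) with hlo
  have hlofacts : k ≤ lo ∧ n + 1 - l ≤ lo ∧ (lo = k ∨ lo = n + 1 - l) := by
    rcases max_cases k (n + 1 - l) with ⟨h1, h2⟩ | ⟨h1, h2⟩ <;> omega
  set hi := min (2 * n + 1 - k) (n + l) with hhi
  have hhifacts : hi ≤ 2 * n + 1 - k ∧ hi ≤ n + l ∧ (hi = 2 * n + 1 - k ∨ hi = n + l) := by
    rcases min_cases (2 * n + 1 - k) (n + l) with ⟨h1, h2⟩ | ⟨h1, h2⟩ <;> omega
  have hkn : k ≤ n := by omega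
  have hodd : (hi - lo) % 2 = 1 := by omega
  have hlole : lo ≤ wt x := by omega
  have hwhi : wt x ≤ hi := by omega
  rw [ptr_formula n l D hD x c hcD hxc k hk]
  by_cases hpar : (wt x - lo) % 2 = 0
  · rw [if_pos hpar]
    have hj1 : j + 1 < c.length := by omega
    have hidx : wt x + 1 - k = j + 1 := by omega
    rw [hidx, (List.getD_eq_get c x ⟨j + 1, hj1⟩ : c.getD (j + 1) x = c.get ⟨j + 1, hj1⟩)]
    set y := c.get ⟨j + 1, hj1⟩ with hy
    have hwy : wt y = k + (j + 1) := hk (j + 1) hj1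
    have hyc : y ∈ c := List.get_mem c _
    have hadj : (cube (2 * n + 1)).Adj x y := by
      rw [← hget]
      exact List.isChain_iff_getElem.mp hch j (by omega)
    refine ⟨⟨by omega, by omega⟩, hadj, ?_, ?_⟩
    · refine Set.mem_biUnion hcD ⟨j, hj1, ?_⟩
      rw [← hget]
    · rw [ptr_formula n l D hD y c hcD hyc k hk]
      have : (wt y - lo) % 2 ≠ 0 := by omega
      rw [if_neg this]
      have : wt y - 1 - k = j := by omega
      rw [this, (List.getD_eq_get c y ⟨j, hj⟩ : c.getD j y = c.get ⟨j, hj⟩), hget]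
  · rw [if_neg hpar]
    have hlolt : lo + 1 ≤ wt x := by omega
    have hj0 : 1 ≤ j := by omega
    have hjm : j - 1 < c.length := by omega
    have hidx : wt x - 1 - k = j - 1 := by omega
    rw [hidx, (List.getD_eq_get c x ⟨j - 1, hjm⟩ : c.getD (j - 1) x = c.get ⟨j - 1, hjm⟩)]
    set y := c.get ⟨j - 1, hjm⟩ with hy
    have hwy : wt y = k + (j - 1) := hk (j - 1) hjm
    have hyc : y ∈ c := List.get_mem c _
    have hs : j - 1 + 1 = j := by omega
    have hadj : (cube (2 * n + 1)).Adj y x := by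
      have h2 := List.isChain_iff_getElem.mp hch (j - 1) (by omega)
      simp only [hs] at h2
      rw [← hget]
      exact h2
    refine ⟨⟨by omega, by omega⟩, hadj.symm, ?_, ?_⟩
    · refine Set.mem_biUnion hcD ⟨j - 1, by omega, ?_⟩
      simp only [hs]
      rw [Sym2.eq_swap]
      exact congrArg (fun z => s(y, z)) hget.symm
    · rw [ptr_formula n l D hD y c hcD hyc k hk]
      have : (wt y - lo) % 2 = 0 := by omega
      rw [if_pos this]
      have : wt y + 1 - k = j := by omega
      rw [this, (List.getD_eq_get c y ⟨j, hj⟩ : c.getD j y = c.get ⟨j, hj⟩), hget]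

/-- The partner map on the middle levels. -/
noncomputable def mF (n l : ℕ) (hl1 : 1 ≤ l) (hl2 : l ≤ n + 1)
    (D : Set (List (Fin (2 * n + 1) → Bool))) (hD : IsSCD (2 * n + 1) D) :
    middleSet n l → middleSet n l :=
  fun u => ⟨ptr n l D hD u.val, (ptr_spec n l hl1 hl2 D hD u.val u.property).1⟩

theorem mF_invol (n l : ℕ) (hl1 : 1 ≤ l) (hl2 : l ≤ n + 1)
    (D : Set (List (Fin (2 * n + 1) → Bool))) (hD : IsSCD (2 * n + 1) D)
    (u : middleSet n l) : mF n l hl1 hl2 D hD (mF n l hl1 hl2 D hD u) = u :=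
  Subtype.ext (ptr_spec n l hl1 hl2 D hD u.val u.property).2.2.2

theorem mF_adj (n l : ℕ) (hl1 : 1 ≤ l) (hl2 : l ≤ n + 1)
    (D : Set (List (Fin (2 * n + 1) → Bool))) (hD : IsSCD (2 * n + 1) D)
    (u : middleSet n l) : (cube (2 * n + 1)).Adj u.val (mF n l hl1 hl2 D hD u).val :=
  (ptr_spec n l hl1 hl2 D hD u.val u.property).2.1

theorem mF_edge (n l : ℕ) (hl1 : 1 ≤ l) (hl2 : l ≤ n + 1)
    (D : Set (List (Fin (2 * n + 1) → Bool))) (hD : IsSCD (2 * n + 1) D)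
    (u : middleSet n l) : s(u.val, (mF n l hl1 hl2 D hD u).val) ∈ scdEdges D :=
  (ptr_spec n l hl1 hl2 D hD u.val u.property).2.2.1

theorem mF_ne (n l : ℕ) (hl1 : 1 ≤ l) (hl2 : l ≤ n + 1)
    (D : Set (List (Fin (2 * n + 1) → Bool))) (hD : IsSCD (2 * n + 1) D)
    (u : middleSet n l) : mF n l hl1 hl2 D hD u ≠ u := by
  intro h
  exact (mF_adj n l hl1 hl2 D hD u).ne (congrArg Subtype.val h.symm)

/-- The matching on the middle levels induced by an SCD, as a simple graph. -/
noncomputable def scdMatch (n l : ℕ) (hl1 : 1 ≤ l) (hl2 : l ≤ n + 1)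
    (D : Set (List (Fin (2 * n + 1) → Bool))) (hD : IsSCD (2 * n + 1) D) :
    SimpleGraph (middleSet n l) where
  Adj u v := v = mF n l hl1 hl2 D hD u ∨ u = mF n l hl1 hl2 D hD v
  symm := by constructor; intro u v h; tauto
  loopless := by constructor; intro u h; rcases h with h | h <;> exact mF_ne n l hl1 hl2 D hD u h.symm

theorem scdMatch_adj (n l : ℕ) (hl1 : 1 ≤ l) (hl2 : l ≤ n + 1)
    (D : Set (List (Fin (2 * n + 1) → Bool))) (hD : IsSCD (2 * n + 1) D)
    (u v : middleSet n l) :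
    (scdMatch n l hl1 hl2 D hD).Adj u v ↔ v = mF n l hl1 hl2 D hD u := by
  constructor
  · rintro (h | h)
    · exact h
    · rw [h, mF_invol]
  · exact Or.inl

theorem scdMatch_nbr (n l : ℕ) (hl1 : 1 ≤ l) (hl2 : l ≤ n + 1)
    (D : Set (List (Fin (2 * n + 1) → Bool))) (hD : IsSCD (2 * n + 1) D)
    (u : middleSet n l) :
    (scdMatch n l hl1 hl2 D hD).neighborSet u = {mF n l hl1 hl2 D hD u} := by
  ext v
  simp [SimpleGraph.mem_neighborSet, scdMatch_adj]

theorem scdMatch_isPM (n l : ℕ) (hl1 : 1 ≤ l) (hl2 : l ≤ n + 1)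
    (D : Set (List (Fin (2 * n + 1) → Bool))) (hD : IsSCD (2 * n + 1) D) :
    IsPerfectMatchingOf (middleGraph n l) (scdMatch n l hl1 hl2 D hD) := by
  constructor
  · intro u v h
    rw [scdMatch_adj] at h
    subst h
    exact mF_adj n l hl1 hl2 D hD u
  · intro u
    rw [scdMatch_nbr]
    exact Set.ncard_singleton _


/-- Given two edge-disjoint symmetric chain decompositions `D`, `D'` of the `(2n+1)`-cube and
`1 ≤ ℓ ≤ n+1`, there are perfect matchings `M`, `M'` of the middle `2ℓ` levels graph whose
edges lie on chains of `D` resp. `D'`, which share no edge, and whose union is a cycle factor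
of the middle `2ℓ` levels graph. -/
theorem edge_disjoint_SCDs_give_cycle_factor (n : ℕ) (hn : 1 ≤ n)
    (D D' : Set (List (Fin (2 * n + 1) → Bool)))
    (hD : IsSCD (2 * n + 1) D) (hD' : IsSCD (2 * n + 1) D')
    (hDD' : EdgeDisjointSCD D D')
    (l : ℕ) (hl1 : 1 ≤ l) (hl2 : l ≤ n + 1) :
    ∃ M M' : SimpleGraph (middleSet n l),
      IsPerfectMatchingOf (middleGraph n l) M ∧
      IsPerfectMatchingOf (middleGraph n l) M' ∧
      (∀ u v : middleSet n l, M.Adj u v → s(u.val, v.val) ∈ scdEdges D) ∧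
      (∀ u v : middleSet n l, M'.Adj u v → s(u.val, v.val) ∈ scdEdges D') ∧
      (∀ u v : middleSet n l, ¬ (M.Adj u v ∧ M'.Adj u v)) ∧
      IsCycleFactor (middleGraph n l) (M ⊔ M') := by
  refine ⟨scdMatch n l hl1 hl2 D hD, scdMatch n l hl1 hl2 D' hD', ?_, ?_, ?_, ?_, ?_, ?_⟩
  · exact scdMatch_isPM n l hl1 hl2 D hD
  · exact scdMatch_isPM n l hl1 hl2 D' hD'
  · intro u v h
    rw [scdMatch_adj] at h
    subst h
    exact mF_edge n l hl1 hl2 D hD u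
  · intro u v h
    rw [scdMatch_adj] at h
    subst h
    exact mF_edge n l hl1 hl2 D' hD' u
  · rintro u v ⟨h1, h2⟩
    rw [scdMatch_adj] at h1 h2
    have hne : mF n l hl1 hl2 D hD u ≠ mF n l hl1 hl2 D' hD' u := by
      intro h
      have e1 := mF_edge n l hl1 hl2 D hD u
      have e2 := mF_edge n l hl1 hl2 D' hD' u
      rw [h] at e1
      exact Set.disjoint_left.mp hDD' e1 e2
    exact hne (h1.symm.trans h2)
  · constructor
    · exact sup_le (scdMatch_isPM n l hl1 hl2 D hD).1 (scdMatch_isPM n l hl1 hl2 D' hD').1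
    · intro u
      have hne : mF n l hl1 hl2 D hD u ≠ mF n l hl1 hl2 D' hD' u := by
        intro h
        have e1 := mF_edge n l hl1 hl2 D hD u
        have e2 := mF_edge n l hl1 hl2 D' hD' u
        rw [h] at e1
        exact Set.disjoint_left.mp hDD' e1 e2
      have : (scdMatch n l hl1 hl2 D hD ⊔ scdMatch n l hl1 hl2 D' hD').neighborSet u =
          {mF n l hl1 hl2 D hD u, mF n l hl1 hl2 D' hD' u} := by
        rw [show (scdMatch n l hl1 hl2 D hD ⊔ scdMatch n l hl1 hl2 D' hD').neighborSet u =
          (scdMatch n l hl1 hl2 D hD).neighborSet u ∪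
          (scdMatch n l hl1 hl2 D' hD').neighborSet u from rfl,
          scdMatch_nbr, scdMatch_nbr, Set.singleton_union]
      rw [this]
      exact Set.ncard_pair hne
end

section
/- For every n ≥ 1, the spanning subgraph of Q_n whose edge set is the union over k = 0, 1, …, n−1 of the 0-lexical matchings M^0_{n,k} is a disjoint union of symmetric chains: every connected component of this subgraph is a path (x_k, x_{k+1}, …, x_{n−k}) for some 0 ≤ k ≤ n/2 in which x_i has Hamming weight i for each i. In particular, these components form a symmetric chain decomposition of Q_n. -/
/-- The number of 1-bits among the first `j` bits of `x` (interpreting a bitstring as a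
lattice path, this determines the height after `j` steps). -/
def onesUpTo {n : ℕ} (x : Fin n → Bool) (j : ℕ) : ℕ :=
  (Finset.univ.filter fun i : Fin n => i.val < j ∧ x i = true).card

/-- The height of the lattice path of `x` after `j` steps: number of 1s minus number of 0s
among the first `j` bits (appended steps beyond the length of `x` being down-steps). -/
def hgt {n : ℕ} (x : Fin n → Bool) (j : ℕ) : ℤ := 2 * (onesUpTo x j : ℤ) - (j : ℤ)

/-- The length of the extended lattice path `x^↑`: if the final height `2·wt x − n` is `≥ −1`,
down-steps are appended until the path ends at height `−1` (total length `2·wt x + 1`);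
otherwise nothing is appended. -/
def extLen {n : ℕ} (x : Fin n → Bool) : ℕ := max n (2 * wt x + 1)

/-- Position `j` (0-indexed) of the extended path `x^↑` is a down-step: either it is a 0-bit
of `x`, or one of the appended down-steps. -/
def isDownStep {n : ℕ} (x : Fin n → Bool) (j : ℕ) : Prop :=
  j < extLen x ∧ ∀ h : j < n, x ⟨j, h⟩ = false

/-- The `i`-lexical matching `M^i_{n,k}` between levels `k` and `k+1` of the `n`-cube, as a
relation: `lexUp n k i x y` holds iff `x` lies in level `k` and `y = M^{i,↑}_{n,k}(x)`, i.e.,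
`y` is obtained from `x` by flipping to 1 the 0-bit at the `i`-th down-step of `x^↑` in the
order of decreasing starting height, ties broken from right to left, counting from 0,
provided this down-step lies within `x`. -/
def lexUp (n k i : ℕ) (x y : Fin n → Bool) : Prop :=
  wt x = k ∧ ∃ d : ℕ, d < n ∧ isDownStep x d ∧
    ({j : ℕ | isDownStep x j ∧ (hgt x d < hgt x j ∨ (hgt x j = hgt x d ∧ d < j))}).ncard = i ∧
    y = fun t : Fin n => if t.val = d then true else x t
namespace Lex0
variable {n : ℕ}

lemma onesUpTo_zero (x : Fin n → Bool) : onesUpTo x 0 = 0 := by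
  simp [onesUpTo]

lemma onesUpTo_of_le (x : Fin n → Bool) {j : ℕ} (h : n ≤ j) : onesUpTo x j = wt x := by
  unfold onesUpTo wt
  congr 1
  apply Finset.filter_congr
  intro i _
  simp [lt_of_lt_of_le i.isLt h]

lemma onesUpTo_succ (x : Fin n → Bool) (j : ℕ) :
    onesUpTo x (j+1) = onesUpTo x j +
      (if h : j < n then (if x ⟨j, h⟩ = true then 1 else 0) else 0) := by
  classical
  unfold onesUpTo
  have h1 : (Finset.univ.filter fun i : Fin n => i.val < j+1 ∧ x i = true)
      = (Finset.univ.filter fun i : Fin n => i.val < j ∧ x i = true)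
        ∪ (Finset.univ.filter fun i : Fin n => i.val = j ∧ x i = true) := by
    ext i
    simp only [Finset.mem_filter, Finset.mem_union, Finset.mem_univ, true_and]
    constructor
    · rintro ⟨hij, hx⟩
      rcases Nat.lt_succ_iff_lt_or_eq.1 hij with h | h
      · exact Or.inl ⟨h, hx⟩
      · exact Or.inr ⟨h, hx⟩
    · rintro (⟨h, hx⟩ | ⟨h, hx⟩)
      · exact ⟨Nat.lt_succ_of_lt h, hx⟩
      · exact ⟨h ▸ Nat.lt_succ_self j, hx⟩
  have hdisj : Disjoint (Finset.univ.filter fun i : Fin n => i.val < j ∧ x i = true)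
      (Finset.univ.filter fun i : Fin n => i.val = j ∧ x i = true) := by
    rw [Finset.disjoint_left]
    intro a ha hb
    simp only [Finset.mem_filter] at ha hb
    omega
  rw [h1, Finset.card_union_of_disjoint hdisj]
  congr 1
  by_cases hj : j < n
  · by_cases hx : x ⟨j, hj⟩ = true
    · rw [dif_pos hj, if_pos hx, Finset.card_eq_one]
      refine ⟨⟨j, hj⟩, ?_⟩
      ext i
      simp only [Finset.mem_filter, Finset.mem_univ, true_and, Finset.mem_singleton]
      constructor
      · rintro ⟨h1, _⟩; exact Fin.ext h1
      · rintro rfl; exact ⟨rfl, hx⟩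
    · rw [dif_pos hj, if_neg hx, Finset.card_eq_zero]
      ext i
      simp only [Finset.mem_filter, Finset.mem_univ, true_and, Finset.notMem_empty,
        iff_false, not_and]
      rintro rfl
      intro h
      exact hx (by convert h using 2)
  · rw [dif_neg hj, Finset.card_eq_zero]
    ext i
    simp only [Finset.mem_filter, Finset.mem_univ, true_and, Finset.notMem_empty,
      iff_false, not_and]
    rintro rfl
    exact absurd i.isLt hj

lemma hgt_zero (x : Fin n → Bool) : hgt x 0 = 0 := by simp [hgt, onesUpTo_zero]

lemma hgt_succ_lt (x : Fin n → Bool) {j : ℕ} (hj : j < n) :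
    hgt x (j+1) = hgt x j + (if x ⟨j, hj⟩ = true then 1 else -1) := by
  unfold hgt
  rw [onesUpTo_succ, dif_pos hj]
  by_cases hx : x ⟨j, hj⟩ = true <;> simp [hx] <;> push_cast <;> ring

lemma hgt_of_ge (x : Fin n → Bool) {j : ℕ} (hj : n ≤ j) :
    hgt x j = 2 * (wt x : ℤ) - j := by
  unfold hgt
  rw [onesUpTo_of_le x hj]

lemma hgt_n (x : Fin n → Bool) : hgt x n = 2 * (wt x : ℤ) - n := hgt_of_ge x le_rfl

lemma bit_false_of_hgt_lt (x : Fin n → Bool) {j : ℕ} (hj : j < n)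
    (h : hgt x (j+1) < hgt x j) : x ⟨j, hj⟩ = false ∧ hgt x (j+1) = hgt x j - 1 := by
  have := hgt_succ_lt x hj
  by_cases hx : x ⟨j, hj⟩ = true
  · rw [if_pos hx] at this; omega
  · rw [if_neg hx] at this
    exact ⟨Bool.eq_false_iff.2 hx, by omega⟩

lemma bit_true_of_hgt_lt (x : Fin n → Bool) {j : ℕ} (hj : j < n)
    (h : hgt x j < hgt x (j+1)) : x ⟨j, hj⟩ = true ∧ hgt x (j+1) = hgt x j + 1 := by
  have := hgt_succ_lt x hj
  by_cases hx : x ⟨j, hj⟩ = true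
  · rw [if_pos hx] at this; exact ⟨hx, by omega⟩
  · rw [if_neg hx] at this; omega

/-- maximum of `hgt x` over `[0, n]`. -/
def Mx (x : Fin n → Bool) : ℤ :=
  ((Finset.range (n+1)).image (hgt x)).max'
    (Finset.Nonempty.image ⟨0, Finset.mem_range.2 (Nat.succ_pos n)⟩ _)

lemma hgt_le_Mx (x : Fin n → Bool) {j : ℕ} (hj : j ≤ n) : hgt x j ≤ Mx x :=
  Finset.le_max' _ _ (Finset.mem_image.2 ⟨j, Finset.mem_range.2 (by omega), rfl⟩)

lemma exists_argmax (x : Fin n → Bool) : ∃ j ≤ n, hgt x j = Mx x := by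
  have := Finset.max'_mem ((Finset.range (n+1)).image (hgt x))
    (Finset.Nonempty.image ⟨0, Finset.mem_range.2 (Nat.succ_pos n)⟩ _)
  rw [Finset.mem_image] at this
  obtain ⟨j, hj, hje⟩ := this
  exact ⟨j, by have := Finset.mem_range.1 hj; omega, hje⟩

lemma Mx_nonneg (x : Fin n → Bool) : 0 ≤ Mx x := by
  have := hgt_le_Mx x (Nat.zero_le n)
  rw [hgt_zero] at this
  exact this

/-- The last argmax of `hgt x` over `[0, n]`. -/
def dIdx (x : Fin n → Bool) : ℕ := Nat.findGreatest (fun j => hgt x j = Mx x) n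

lemma dIdx_le (x : Fin n → Bool) : dIdx x ≤ n := Nat.findGreatest_le n

lemma hgt_dIdx (x : Fin n → Bool) : hgt x (dIdx x) = Mx x := by
  obtain ⟨j, hj, hje⟩ := exists_argmax x
  exact Nat.findGreatest_spec (P := fun j => hgt x j = Mx x) hj hje

lemma le_dIdx {x : Fin n → Bool} {j : ℕ} (hj : j ≤ n) (h : hgt x j = Mx x) :
    j ≤ dIdx x := Nat.le_findGreatest (P := fun j => hgt x j = Mx x) hj h

lemma hgt_lt_of_dIdx_lt {x : Fin n → Bool} {j : ℕ} (h1 : dIdx x < j) (h2 : j ≤ n) :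
    hgt x j < Mx x := by
  have h3 := Nat.findGreatest_is_greatest (P := fun j => hgt x j = Mx x) h1 h2
  have h4 := hgt_le_Mx x h2
  exact lt_of_le_of_ne h4 h3

lemma dIdx_lt_of_hgt_n_lt {x : Fin n → Bool} (h : hgt x n < Mx x) : dIdx x < n := by
  rcases lt_or_eq_of_le (dIdx_le x) with h' | h'
  · exact h'
  · exfalso; have := hgt_dIdx x; rw [h'] at this; omega

lemma onesUpTo_flip (x : Fin n → Bool) {d : ℕ} (hd : d < n) (hx : x ⟨d, hd⟩ = false)
    (j : ℕ) : onesUpTo (fun t : Fin n => if t.val = d then true else x t) j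
      = onesUpTo x j + (if d < j then 1 else 0) := by
  classical
  unfold onesUpTo
  by_cases hdj : d < j
  · rw [if_pos hdj]
    have key : (Finset.univ.filter fun i : Fin n =>
          i.val < j ∧ (if i.val = d then true else x i) = true)
        = insert ⟨d, hd⟩ (Finset.univ.filter fun i : Fin n => i.val < j ∧ x i = true) := by
      ext i
      simp only [Finset.mem_filter, Finset.mem_univ, true_and, Finset.mem_insert]
      constructor
      · rintro ⟨hij, hb⟩
        by_cases hid : i.val = d
        · exact Or.inl (Fin.ext hid)
        · rw [if_neg hid] at hb; exact Or.inr ⟨hij, hb⟩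
      · rintro (rfl | ⟨hij, hb⟩)
        · exact ⟨hdj, by simp⟩
        · refine ⟨hij, ?_⟩
          by_cases hid : i.val = d
          · rw [if_pos hid]
          · rw [if_neg hid]; exact hb
    rw [key, Finset.card_insert_of_notMem]
    simp only [Finset.mem_filter, Finset.mem_univ, true_and, not_and]
    intro _
    rw [hx]; simp
  · rw [if_neg hdj]
    have key : (Finset.univ.filter fun i : Fin n =>
          i.val < j ∧ (if i.val = d then true else x i) = true)
        = (Finset.univ.filter fun i : Fin n => i.val < j ∧ x i = true) := by
      ext i
      simp only [Finset.mem_filter, Finset.mem_univ, true_and]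
      have : i.val < j → i.val ≠ d := by omega
      constructor
      · rintro ⟨hij, hb⟩; rw [if_neg (this hij)] at hb; exact ⟨hij, hb⟩
      · rintro ⟨hij, hb⟩; rw [if_neg (this hij)]; exact ⟨hij, hb⟩
    rw [key, Nat.add_zero]

lemma hgt_flip (x : Fin n → Bool) {d : ℕ} (hd : d < n) (hx : x ⟨d, hd⟩ = false)
    (j : ℕ) : hgt (fun t : Fin n => if t.val = d then true else x t) j
      = hgt x j + (if d < j then 2 else 0) := by
  unfold hgt
  rw [onesUpTo_flip x hd hx j]
  by_cases hdj : d < j <;> simp [hdj] <;> push_cast <;> ring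

lemma wt_flip (x : Fin n → Bool) {d : ℕ} (hd : d < n) (hx : x ⟨d, hd⟩ = false) :
    wt (fun t : Fin n => if t.val = d then true else x t) = wt x + 1 := by
  have h1 := onesUpTo_flip x hd hx n
  rw [onesUpTo_of_le _ le_rfl, onesUpTo_of_le _ le_rfl, if_pos hd] at h1
  exact h1

lemma hamming_flip (x : Fin n → Bool) {d : ℕ} (hd : d < n) (hx : x ⟨d, hd⟩ = false) :
    hammingDist x (fun t : Fin n => if t.val = d then true else x t) = 1 := by
  classical
  have key : (Finset.univ.filter fun i : Fin n =>
        x i ≠ (if i.val = d then true else x i)) = {⟨d, hd⟩} := by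
    ext i
    simp only [Finset.mem_filter, Finset.mem_univ, true_and, Finset.mem_singleton]
    constructor
    · intro h
      by_cases hid : i.val = d
      · exact Fin.ext hid
      · rw [if_neg hid] at h; exact absurd rfl h
    · rintro rfl
      simp [hx]
  unfold hammingDist
  rw [key, Finset.card_singleton]

/-- The up map of the 0-lexical matching. -/
def upF (x : Fin n → Bool) : Fin n → Bool := fun t => if t.val = dIdx x then true else x t

lemma exists_hgt_eq_Mx (y : Fin n → Bool) : ∃ j, hgt y j = Mx y := by
  obtain ⟨j, _, hj⟩ := exists_argmax y; exact ⟨j, hj⟩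

/-- First argmax of `hgt y`. -/
noncomputable def fIdx (y : Fin n → Bool) : ℕ := Nat.find (exists_hgt_eq_Mx y)

/-- The down map (inverse of `upF`). -/
noncomputable def dnF (y : Fin n → Bool) : Fin n → Bool :=
  fun t => if t.val + 1 = fIdx y then false else y t

lemma fIdx_le (y : Fin n → Bool) : fIdx y ≤ n := by
  obtain ⟨j, hjn, hj⟩ := exists_argmax y
  exact le_trans (Nat.find_min' _ hj) hjn

lemma hgt_fIdx (y : Fin n → Bool) : hgt y (fIdx y) = Mx y := Nat.find_spec (exists_hgt_eq_Mx y)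

lemma hgt_lt_of_lt_fIdx {y : Fin n → Bool} {j : ℕ} (h : j < fIdx y) : hgt y j < Mx y :=
  lt_of_le_of_ne (hgt_le_Mx y (le_trans h.le (fIdx_le y))) (Nat.find_min _ h)

lemma bit_dIdx_false {x : Fin n → Bool} (hd : dIdx x < n) : x ⟨dIdx x, hd⟩ = false := by
  have h1 : hgt x (dIdx x + 1) < Mx x := hgt_lt_of_dIdx_lt (Nat.lt_succ_self _) hd
  rw [← hgt_dIdx x] at h1
  exact (bit_false_of_hgt_lt x hd h1).1

lemma up_step {x : Fin n → Bool} (hd : dIdx x < n) :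
    wt (upF x) = wt x + 1 ∧ Mx (upF x) = Mx x + 1 ∧ fIdx (upF x) = dIdx x + 1 ∧
      dnF (upF x) = x := by
  set d := dIdx x with hdd
  have hxb : x ⟨d, hd⟩ = false := bit_dIdx_false hd
  have hyh : ∀ j, hgt (upF x) j = hgt x j + (if d < j then 2 else 0) :=
    hgt_flip x hd hxb
  have hstep : hgt x (d + 1) = Mx x - 1 := by
    have h1 : hgt x (d+1) < Mx x := hgt_lt_of_dIdx_lt (Nat.lt_succ_self _) hd
    rw [← hgt_dIdx x] at h1
    have := (bit_false_of_hgt_lt x hd h1).2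
    rw [hgt_dIdx x] at this
    exact this
  have hwt : wt (upF x) = wt x + 1 := wt_flip x hd hxb
  have hMle : ∀ j ≤ n, hgt (upF x) j ≤ Mx x + 1 := by
    intro j hj
    rw [hyh j]
    by_cases hdj : d < j
    · rw [if_pos hdj]
      have := hgt_lt_of_dIdx_lt (x := x) hdj hj
      omega
    · rw [if_neg hdj]
      have := hgt_le_Mx x hj
      omega
  have hMat : hgt (upF x) (d + 1) = Mx x + 1 := by
    rw [hyh, if_pos (Nat.lt_succ_self d), hstep]; ring
  have hMy : Mx (upF x) = Mx x + 1 := by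
    have h1 : Mx (upF x) ≤ Mx x + 1 := by
      obtain ⟨j, hjn, hj⟩ := exists_argmax (upF x)
      rw [← hj]; exact hMle j hjn
    have h2 : Mx x + 1 ≤ Mx (upF x) := by
      rw [← hMat]; exact hgt_le_Mx (upF x) (by omega)
    omega
  have hf : fIdx (upF x) = d + 1 := by
    have h1 : fIdx (upF x) ≤ d + 1 := Nat.find_min' _ (by rw [hMat, hMy])
    have h2 : ¬ (fIdx (upF x) ≤ d) := by
      intro hle
      have h3 := hgt_fIdx (upF x)
      rw [hyh, if_neg (by omega), hMy] at h3
      have := hgt_le_Mx x (le_trans hle hd.le)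
      omega
    omega
  refine ⟨hwt, hMy, hf, ?_⟩
  funext t
  show (if t.val + 1 = fIdx (upF x) then false else upF x t) = x t
  rw [hf]
  by_cases ht : t.val = d
  · rw [if_pos (by omega)]
    have : t = ⟨d, hd⟩ := Fin.ext ht
    rw [this, hxb]
  · rw [if_neg (by omega)]
    show (if t.val = d then true else x t) = x t
    rw [if_neg ht]

lemma dn_step {y : Fin n → Bool} (hM : 0 < Mx y) :
    dIdx (dnF y) < n ∧ upF (dnF y) = y ∧ Mx (dnF y) = Mx y - 1 ∧
      wt y = wt (dnF y) + 1 := by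
  have hf1 : 1 ≤ fIdx y := by
    rcases Nat.eq_zero_or_pos (fIdx y) with h | h
    · exfalso
      have := hgt_fIdx y
      rw [h, hgt_zero] at this
      omega
    · exact h
  set e := fIdx y - 1 with hee
  have hfe : fIdx y = e + 1 := by omega
  have hen : e < n := by have := fIdx_le y; omega
  have h1 : hgt y e < Mx y := hgt_lt_of_lt_fIdx (by omega)
  have h2 : hgt y (e+1) = Mx y := by rw [← hfe]; exact hgt_fIdx y
  have hbit : y ⟨e, hen⟩ = true ∧ hgt y (e+1) = hgt y e + 1 :=
    bit_true_of_hgt_lt y hen (by omega)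
  have hxe : dnF y ⟨e, hen⟩ = false := by
    show (if e + 1 = fIdx y then false else y ⟨e, hen⟩) = false
    rw [if_pos hfe.symm]
  have hflip : y = fun t : Fin n => if t.val = e then true else dnF y t := by
    funext t
    by_cases ht : t.val = e
    · rw [if_pos ht]
      have : t = ⟨e, hen⟩ := Fin.ext ht
      rw [this, hbit.1]
    · rw [if_neg ht]
      show y t = (if t.val + 1 = fIdx y then false else y t)
      rw [if_neg (by omega)]
  have hyh : ∀ j, hgt y j = hgt (dnF y) j + (if e < j then 2 else 0) := by
    intro j
    conv_lhs => rw [hflip]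
    exact hgt_flip (dnF y) hen hxe j
  have hxh : ∀ j, hgt (dnF y) j = hgt y j - (if e < j then 2 else 0) := by
    intro j; have := hyh j; omega
  have hxeM : hgt (dnF y) e = Mx y - 1 := by
    rw [hxh, if_neg (lt_irrefl e)]
    have := hbit.2
    omega
  have hMle : ∀ j ≤ n, hgt (dnF y) j ≤ Mx y - 1 := by
    intro j hj
    rw [hxh j]
    by_cases hej : e < j
    · rw [if_pos hej]
      have := hgt_le_Mx y hj
      omega
    · rw [if_neg hej]
      have : hgt y j < Mx y := hgt_lt_of_lt_fIdx (by omega)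
      omega
  have hMx : Mx (dnF y) = Mx y - 1 := by
    have ha : Mx y - 1 ≤ Mx (dnF y) := by rw [← hxeM]; exact hgt_le_Mx _ hen.le
    have hb : Mx (dnF y) ≤ Mx y - 1 := by
      obtain ⟨j, hjn, hj⟩ := exists_argmax (dnF y)
      rw [← hj]; exact hMle j hjn
    omega
  have hdx : dIdx (dnF y) = e := by
    have ha : e ≤ dIdx (dnF y) := le_dIdx hen.le (by rw [hxeM, hMx])
    by_contra hne
    have hgt' : e < dIdx (dnF y) := by omega
    have := hgt_dIdx (dnF y)
    rw [hMx, hxh, if_pos hgt'] at this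
    have h5 : hgt y (dIdx (dnF y)) ≤ Mx y := hgt_le_Mx y (dIdx_le _)
    omega
  refine ⟨by omega, ?_, hMx, ?_⟩
  · funext t
    show (if t.val = dIdx (dnF y) then true else dnF y t) = y t
    rw [hdx]
    conv_rhs => rw [hflip]
  · conv_lhs => rw [hflip]
    rw [wt_flip (dnF y) hen hxe]

lemma n_le_extLen (x : Fin n → Bool) : n ≤ extLen x := le_max_left _ _

lemma isDownStep_dIdx (x : Fin n → Bool) : isDownStep x (dIdx x) := by
  rcases lt_or_eq_of_le (dIdx_le x) with hd | hd
  · exact ⟨lt_of_lt_of_le hd (n_le_extLen x), fun h => bit_dIdx_false h⟩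
  · have h1 := hgt_dIdx x
    rw [hd] at h1
    have h2 : 0 ≤ hgt x n := by rw [h1]; exact Mx_nonneg x
    rw [hgt_n] at h2
    have h3 : n < 2 * wt x + 1 := by omega
    constructor
    · rw [hd]
      exact lt_of_lt_of_le h3 (le_max_right _ _)
    · intro h
      rw [hd] at h
      exact absurd h (lt_irrefl n)

/-- The key characterization: `lexUp n k 0 x y` iff `y = upF x` and `dIdx x < n`. -/
lemma lexUp_iff {x y : Fin n → Bool} {k : ℕ} :
    lexUp n k 0 x y ↔ wt x = k ∧ dIdx x < n ∧ y = upF x := by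
  constructor
  · rintro ⟨hw, d, hdn, hdown, hcard, hy⟩
    have hfin : ({j : ℕ | isDownStep x j ∧
        (hgt x d < hgt x j ∨ (hgt x j = hgt x d ∧ d < j))}).Finite := by
      apply Set.Finite.subset (Set.finite_Iio (extLen x))
      intro j hj
      exact hj.1.1
    have hempty : ({j : ℕ | isDownStep x j ∧
        (hgt x d < hgt x j ∨ (hgt x j = hgt x d ∧ d < j))}) = ∅ :=
      (Set.ncard_eq_zero hfin).1 hcard
    have hdeq : d = dIdx x := by
      by_contra hne
      have hbad : dIdx x ∈ ({j : ℕ | isDownStep x j ∧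
          (hgt x d < hgt x j ∨ (hgt x j = hgt x d ∧ d < j))}) := by
        refine ⟨isDownStep_dIdx x, ?_⟩
        rcases lt_or_eq_of_le (hgt_le_Mx x hdn.le) with h | h
        · left; rw [hgt_dIdx]; exact h
        · right
          refine ⟨by rw [hgt_dIdx, h], ?_⟩
          have := le_dIdx hdn.le h
          omega
      rw [hempty] at hbad
      exact hbad
    subst hdeq
    exact ⟨hw, hdn, hy⟩
  · rintro ⟨hw, hdn, hy⟩
    refine ⟨hw, dIdx x, hdn, isDownStep_dIdx x, ?_, hy⟩
    convert Set.ncard_empty ℕ using 2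
    rw [Set.eq_empty_iff_forall_notMem]
    rintro j ⟨⟨hj1, hj2⟩, hbad⟩
    rw [hgt_dIdx] at hbad
    by_cases hjn : j ≤ n
    · rcases hbad with h | h
      · exact absurd (hgt_le_Mx x hjn) (not_le.2 h)
      · have := hgt_lt_of_dIdx_lt h.2 hjn
        omega
    · have h1 : hgt x j < hgt x n := by
        rw [hgt_of_ge x (by omega), hgt_n]
        omega
      have h2 := hgt_le_Mx x (le_refl n)
      rcases hbad with h | h <;> omega

lemma btm_wt {b : Fin n → Bool} (hb : Mx b = 0) : 2 * wt b ≤ n := by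
  have := hgt_le_Mx b (le_refl n)
  rw [hgt_n, hb] at this
  omega

lemma iter_props {b : Fin n → Bool} (hb : Mx b = 0) :
    ∀ t, t ≤ n - 2 * wt b →
      Mx (upF^[t] b) = t ∧ wt (upF^[t] b) = wt b + t ∧ dnF^[t] (upF^[t] b) = b := by
  intro t
  induction t with
  | zero => intro _; simpa using hb
  | succ t ih =>
    intro ht
    have h2 := btm_wt hb
    obtain ⟨hM, hw, hdn⟩ := ih (by omega)
    set x := upF^[t] b with hx
    have hdx : dIdx x < n := by
      apply dIdx_lt_of_hgt_n_lt
      rw [hgt_n, hw, hM]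
      push_cast
      omega
    obtain ⟨hw2, hM2, _, hdn2⟩ := up_step hdx
    rw [Function.iterate_succ_apply']
    refine ⟨by rw [hM2, hM]; push_cast; ring, by rw [hw2, hw]; ring, ?_⟩
    rw [Function.iterate_succ_apply, hdn2]
    exact hdn

lemma exists_bottom (x : Fin n → Bool) :
    ∃ b t, Mx b = 0 ∧ t ≤ n - 2 * wt b ∧ upF^[t] b = x ∧ Mx x = t := by
  generalize hm : (Mx x).toNat = m
  induction m generalizing x with
  | zero =>
    have h0 : Mx x = 0 := by have := Mx_nonneg x; omega
    exact ⟨x, 0, h0, Nat.zero_le _, rfl, by simpa using h0⟩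
  | succ m ih =>
    have hM : 0 < Mx x := by have := Mx_nonneg x; omega
    obtain ⟨hdn, hup, hMx, hwt⟩ := dn_step hM
    obtain ⟨b, t, hb, ht, hiter, hMt⟩ := ih (dnF x) (by omega)
    have h2 := btm_wt hb
    have hwdn : wt (dnF x) = wt b + t := by
      have h := (iter_props hb t ht).2.1
      rw [hiter] at h
      exact h
    have hMxt : Mx x = (t : ℤ) + 1 := by omega
    have hhn : hgt x n ≤ Mx x := hgt_le_Mx x le_rfl
    rw [hgt_n] at hhn
    refine ⟨b, t + 1, hb, by omega, ?_, by push_cast; omega⟩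
    rw [Function.iterate_succ_apply', hiter, hup]

/-- The chain through the bottom vertex `b`. -/
noncomputable def chain (b : Fin n → Bool) : List (Fin n → Bool) :=
  (List.range (n - 2 * wt b + 1)).map (fun t => upF^[t] b)

lemma chain_length (b : Fin n → Bool) : (chain b).length = n - 2 * wt b + 1 := by
  simp [chain]

lemma chain_get (b : Fin n → Bool) (i : ℕ) (h : i < (chain b).length) :
    (chain b).get ⟨i, h⟩ = upF^[i] b := by
  simp only [chain, List.get_eq_getElem, List.getElem_map, List.getElem_range]

lemma mem_chain_iff {b x : Fin n → Bool} :
    x ∈ chain b ↔ ∃ t ≤ n - 2 * wt b, upF^[t] b = x := by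
  unfold chain
  rw [List.mem_map]
  constructor
  · rintro ⟨t, ht, rfl⟩
    exact ⟨t, Nat.lt_succ_iff.1 (List.mem_range.1 ht), rfl⟩
  · rintro ⟨t, ht, rfl⟩
    exact ⟨t, List.mem_range.2 (Nat.lt_succ_iff.2 ht), rfl⟩

lemma dIdx_lt_of_chain {b : Fin n → Bool} (hb : Mx b = 0) {t : ℕ}
    (ht : t < n - 2 * wt b) : dIdx (upF^[t] b) < n := by
  obtain ⟨hM, hw, _⟩ := iter_props hb t ht.le
  have h2 := btm_wt hb
  apply dIdx_lt_of_hgt_n_lt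
  rw [hgt_n, hw, hM]
  push_cast
  omega

lemma chain_isSymChain {b : Fin n → Bool} (hb : Mx b = 0) : IsSymChain n (chain b) := by
  have h2 := btm_wt hb
  refine ⟨?_, ?_, wt b, ?_, ?_⟩
  · apply List.ne_nil_of_length_pos
    rw [chain_length]
    omega
  · rw [List.Chain', List.isChain_iff_getElem]
    intro i h
    have e1 := chain_get b i (by omega)
    have e2 := chain_get b (i+1) h
    simp only [List.get_eq_getElem] at e1 e2
    rw [e1, e2]
    rw [chain_length] at h
    have hi : i < n - 2 * wt b := by omega
    have hdx := dIdx_lt_of_chain hb hi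
    show hammingDist (upF^[i] b) (upF^[i+1] b) = 1
    rw [Function.iterate_succ_apply']
    exact hamming_flip _ hdx (bit_dIdx_false hdx)
  · intro i h
    rw [chain_get]
    rw [chain_length] at h
    exact (iter_props hb i (by omega)).2.1
  · rw [chain_length]
    omega

end Lex0

/-- For any `n ≥ 1`, the spanning subgraph of the `n`-cube with edge set
`⋃_{k=0}^{n−1} M^0_{n,k}` is a disjoint union of symmetric chains: there is a symmetric chain
decomposition of the `n`-cube whose chain edges are exactly the edges of the 0-lexical
matchings; consequently every connected component of this subgraph is a symmetric chain. -/
theorem lexical0_is_SCD (n : ℕ) (hn : 1 ≤ n) :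
    ∃ D : Set (List (Fin n → Bool)), IsSCD n D ∧
      scdEdges D = {e : Sym2 (Fin n → Bool) |
        ∃ k < n, ∃ x y : Fin n → Bool, lexUp n k 0 x y ∧ e = s(x, y)} := by
    classical
  refine ⟨{c | ∃ b : Fin n → Bool, Lex0.Mx b = 0 ∧ c = Lex0.chain b}, ⟨?_, ?_⟩, ?_⟩
  · rintro c ⟨b, hb, rfl⟩
    exact Lex0.chain_isSymChain hb
  · intro x
    obtain ⟨b, t, hb, ht, hup, hMt⟩ := Lex0.exists_bottom x
    refine ⟨Lex0.chain b, ⟨⟨b, hb, rfl⟩, Lex0.mem_chain_iff.2 ⟨t, ht, hup⟩⟩, ?_⟩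
    rintro c ⟨⟨b', hb', rfl⟩, hx⟩
    obtain ⟨t', ht', hup'⟩ := Lex0.mem_chain_iff.1 hx
    obtain ⟨hM', _, hdn'⟩ := Lex0.iter_props hb' t' ht'
    obtain ⟨hM, _, hdn⟩ := Lex0.iter_props hb t ht
    rw [hup'] at hM' hdn'
    rw [hup] at hM hdn
    have htt : t = t' := by omega
    have hbb : b' = b := by
      rw [← hdn', ← hdn, htt]
    rw [hbb]
  · ext e
    simp only [scdEdges, Set.mem_iUnion, Set.mem_setOf_eq, exists_prop]
    constructor
    · rintro ⟨c, ⟨b, hb, rfl⟩, i, h, rfl⟩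
      rw [Lex0.chain_length] at h
      have h2 := Lex0.btm_wt hb
      have hi : i < n - 2 * wt b := by omega
      obtain ⟨hM, hw, _⟩ := Lex0.iter_props hb i hi.le
      have hdx := Lex0.dIdx_lt_of_chain hb hi
      refine ⟨wt b + i, by omega, Lex0.upF^[i] b, Lex0.upF^[i+1] b, ?_, ?_⟩
      · rw [Lex0.lexUp_iff]
        exact ⟨hw, hdx, by rw [Function.iterate_succ_apply']⟩
      · rw [Lex0.chain_get, Lex0.chain_get]
    · rintro ⟨k, hk, x, y, hlex, rfl⟩
      obtain ⟨hw, hdx, hy⟩ := Lex0.lexUp_iff.1 hlex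
      obtain ⟨b, t, hb, ht, hup, hMt⟩ := Lex0.exists_bottom x
      have h2 := Lex0.btm_wt hb
      have hwt : wt x = wt b + t := by
        have := (Lex0.iter_props hb t ht).2.1
        rw [hup] at this
        exact this
      have hlt : t < n - 2 * wt b := by
        have h3 : hgt x n < Lex0.Mx x := Lex0.hgt_lt_of_dIdx_lt hdx le_rfl
        rw [Lex0.hgt_n, hMt, hwt] at h3
        push_cast at h3
        omega
      refine ⟨Lex0.chain b, ⟨b, hb, rfl⟩, t, ?_, ?_⟩
      · rw [Lex0.chain_length]
        omega
      · rw [Lex0.chain_get, Lex0.chain_get, hup, Function.iterate_succ_apply', hup, ← hy]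
end

section
/- For every even n ≥ 2, the spanning subgraph of Q_n whose edge set is the union over k = 0, 1, …, n−1 of the 1-lexical matchings M^1_{n,k} is a disjoint union of symmetric chains: every connected component of this subgraph is a path (x_k, x_{k+1}, …, x_{n−k}) for some 0 ≤ k ≤ n/2 in which x_i has Hamming weight i for each i. In particular, these components form a symmetric chain decomposition of Q_n. -/
namespace Lex1

variable {n : ℕ}

/-! ### basic defs -/

def flip (x : Fin n → Bool) (d : ℕ) : Fin n → Bool := fun t => if t.val = d then true else x t
def unflip (x : Fin n → Bool) (d : ℕ) : Fin n → Bool := fun t => if t.val = d then false else x t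

def Mx (x : Fin n → Bool) : ℤ := (Finset.range (n+1)).sup' (by simp) (hgt x)
def visAt (x : Fin n → Bool) (m : ℤ) : Finset ℕ := (Finset.range (n+1)).filter (fun j => hgt x j = m)
def vis (x : Fin n → Bool) : Finset ℕ := visAt x (Mx x)
def lastIn (s : Finset ℕ) : ℕ := s.max.getD 0
def firstIn (s : Finset ℕ) : ℕ := s.min.getD 0
noncomputable def upd (x : Fin n → Bool) : ℕ :=
  if 2 ≤ (vis x).card then lastIn ((vis x).erase (lastIn (vis x)))
  else lastIn (visAt x (Mx x - 1))
noncomputable def step (x : Fin n → Bool) : Fin n → Bool := flip x (upd x)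
noncomputable def dflip (y : Fin n → Bool) : ℕ :=
  (if 2 ≤ (vis y).card then firstIn ((vis y).erase (firstIn (vis y)))
   else firstIn (visAt y (Mx y - 1))) - 1
noncomputable def pred (y : Fin n → Bool) : Fin n → Bool := unflip y (dflip y)
def matchedUp (x : Fin n → Bool) : Prop := 2 ≤ (vis x).card ∨ hgt x n ≤ Mx x - 2
def isBottom (x : Fin n → Bool) : Prop := (vis x).card = 1 ∧ Mx x ≤ 1
def P (x : Fin n → Bool) (d : ℕ) : Set ℕ :=
  {j : ℕ | isDownStep x j ∧ (hgt x d < hgt x j ∨ (hgt x j = hgt x d ∧ d < j))}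

/-! ### lastIn / firstIn -/

lemma lastIn_mem {s : Finset ℕ} (hs : s.Nonempty) : lastIn s ∈ s := by
  rcases Finset.max_of_nonempty hs with ⟨a, ha⟩
  show s.max.getD 0 ∈ s
  rw [ha]; exact Finset.mem_of_max ha

lemma le_lastIn {s : Finset ℕ} {a : ℕ} (ha : a ∈ s) : a ≤ lastIn s := by
  rcases Finset.max_of_nonempty ⟨a, ha⟩ with ⟨b, hb⟩
  show a ≤ s.max.getD 0
  rw [hb]; exact Finset.le_max_of_eq ha hb

lemma firstIn_mem {s : Finset ℕ} (hs : s.Nonempty) : firstIn s ∈ s := by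
  rcases Finset.min_of_nonempty hs with ⟨a, ha⟩
  show s.min.getD 0 ∈ s
  rw [ha]; exact Finset.mem_of_min ha

lemma firstIn_le {s : Finset ℕ} {a : ℕ} (ha : a ∈ s) : firstIn s ≤ a := by
  rcases Finset.min_of_nonempty ⟨a, ha⟩ with ⟨b, hb⟩
  show s.min.getD 0 ≤ a
  rw [hb]; exact Finset.min_le_of_eq ha hb

lemma lastIn_eq {s : Finset ℕ} {a : ℕ} (ha : a ∈ s) (h : ∀ b ∈ s, b ≤ a) : lastIn s = a :=
  le_antisymm (h _ (lastIn_mem ⟨a, ha⟩)) (le_lastIn ha)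

lemma firstIn_eq {s : Finset ℕ} {a : ℕ} (ha : a ∈ s) (h : ∀ b ∈ s, a ≤ b) : firstIn s = a :=
  le_antisymm (firstIn_le ha) (h _ (firstIn_mem ⟨a, ha⟩))

/-! ### onesUpTo and hgt -/

lemma onesUpTo_zero (x : Fin n → Bool) : onesUpTo x 0 = 0 := by
  simp [onesUpTo]

lemma onesUpTo_succ (x : Fin n → Bool) {j : ℕ} (hj : j < n) :
    onesUpTo x (j+1) = onesUpTo x j + (if x ⟨j, hj⟩ then 1 else 0) := by
  unfold onesUpTo
  by_cases hxj : x ⟨j, hj⟩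
  · rw [if_pos hxj]
    have : (Finset.univ.filter fun i : Fin n => i.val < j + 1 ∧ x i = true)
        = insert ⟨j, hj⟩ (Finset.univ.filter fun i : Fin n => i.val < j ∧ x i = true) := by
      ext i
      simp only [Finset.mem_filter, Finset.mem_univ, true_and, Finset.mem_insert]
      constructor
      · rintro ⟨h1, h2⟩
        rcases Nat.lt_succ_iff_lt_or_eq.1 h1 with h | h
        · exact Or.inr ⟨h, h2⟩
        · exact Or.inl (Fin.ext h)
      · rintro (rfl | ⟨h1, h2⟩)
        · exact ⟨Nat.lt_succ_self _, hxj⟩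
        · exact ⟨Nat.lt_succ_of_lt h1, h2⟩
    rw [this, Finset.card_insert_of_notMem (by simp)]
  · rw [if_neg hxj]
    have : (Finset.univ.filter fun i : Fin n => i.val < j + 1 ∧ x i = true)
        = (Finset.univ.filter fun i : Fin n => i.val < j ∧ x i = true) := by
      ext i
      simp only [Finset.mem_filter, Finset.mem_univ, true_and]
      constructor
      · rintro ⟨h1, h2⟩
        rcases Nat.lt_succ_iff_lt_or_eq.1 h1 with h | h
        · exact ⟨h, h2⟩
        · exact absurd h2 (by rwa [show i = ⟨j, hj⟩ from Fin.ext h])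
      · rintro ⟨h1, h2⟩
        exact ⟨Nat.lt_succ_of_lt h1, h2⟩
    rw [this]
    simp

lemma onesUpTo_of_ge (x : Fin n → Bool) {j : ℕ} (hj : n ≤ j) : onesUpTo x j = wt x := by
  unfold onesUpTo wt
  congr 1
  ext i
  simp only [Finset.mem_filter, Finset.mem_univ, true_and, and_iff_right_iff_imp]
  exact fun _ => lt_of_lt_of_le i.isLt hj

lemma hgt_zero (x : Fin n → Bool) : hgt x 0 = 0 := by simp [hgt, onesUpTo_zero]

lemma hgt_n (x : Fin n → Bool) : hgt x n = 2 * wt x - n := by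
  simp [hgt, onesUpTo_of_ge x (le_refl n)]

lemma hgt_of_ge (x : Fin n → Bool) {j : ℕ} (hj : n ≤ j) : hgt x j = 2 * wt x - j := by
  simp [hgt, onesUpTo_of_ge x hj]

lemma hgt_succ_true (x : Fin n → Bool) {j : ℕ} (hj : j < n) (hx : x ⟨j, hj⟩ = true) :
    hgt x (j+1) = hgt x j + 1 := by
  simp [hgt, onesUpTo_succ x hj, hx]; push_cast; ring

lemma hgt_succ_false (x : Fin n → Bool) {j : ℕ} (hj : j < n) (hx : x ⟨j, hj⟩ = false) :
    hgt x (j+1) = hgt x j - 1 := by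
  simp [hgt, onesUpTo_succ x hj, hx]; push_cast; ring

lemma hgt_succ_ge (x : Fin n → Bool) {j : ℕ} (hj : n ≤ j) : hgt x (j+1) = hgt x j - 1 := by
  rw [hgt_of_ge x hj, hgt_of_ge x (le_trans hj (Nat.le_succ j))]
  push_cast; ring

end Lex1

namespace Lex1

variable {n : ℕ}

/-! ### Mx and vis -/

lemma le_Mx (x : Fin n → Bool) {j : ℕ} (hj : j ≤ n) : hgt x j ≤ Mx x :=
  Finset.le_sup' (hgt x) (Finset.mem_range.2 (Nat.lt_succ_of_le hj))

lemma Mx_nonneg (x : Fin n → Bool) : 0 ≤ Mx x := by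
  have := le_Mx x (Nat.zero_le n)
  rwa [hgt_zero] at this

lemma f_le_Mx (x : Fin n → Bool) : hgt x n ≤ Mx x := le_Mx x (le_refl n)

lemma vis_nonempty (x : Fin n → Bool) : (vis x).Nonempty := by
  obtain ⟨j, hj, he⟩ := Finset.exists_mem_eq_sup' (by simp : (Finset.range (n+1)).Nonempty) (hgt x)
  exact ⟨j, Finset.mem_filter.2 ⟨hj, he.symm⟩⟩

lemma mem_visAt {x : Fin n → Bool} {m : ℤ} {j : ℕ} :
    j ∈ visAt x m ↔ j ≤ n ∧ hgt x j = m := by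
  simp [visAt, Nat.lt_succ_iff]

lemma mem_vis {x : Fin n → Bool} {j : ℕ} : j ∈ vis x ↔ j ≤ n ∧ hgt x j = Mx x := mem_visAt

lemma Mx_eq_of {x : Fin n → Bool} {M : ℤ} (hb : ∀ j ≤ n, hgt x j ≤ M)
    (ha : ∃ j ≤ n, hgt x j = M) : Mx x = M := by
  obtain ⟨j, hj, he⟩ := ha
  exact le_antisymm
    (Finset.sup'_le _ _ (fun i hi => hb i (Nat.lt_succ_iff.1 (Finset.mem_range.1 hi))))
    (he ▸ le_Mx x hj)

/-- a visit to the maximum before position `n` must be followed by a down-step. -/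
lemma vis_down {x : Fin n → Bool} {j : ℕ} (hj : j ∈ vis x) (hjn : j < n) :
    x ⟨j, hjn⟩ = false := by
  by_contra h
  have hx : x ⟨j, hjn⟩ = true := by simpa using h
  have h1 := hgt_succ_true x hjn hx
  have h2 := le_Mx x (Nat.succ_le_of_lt hjn)
  rw [h1, (mem_vis.1 hj).2] at h2
  omega

/-! ### isDownStep characterization -/

lemma isDownStep_lt {x : Fin n → Bool} {j : ℕ} (hj : j < n) :
    isDownStep x j ↔ x ⟨j, hj⟩ = false := by
  constructor
  · exact fun h => h.2 hj
  · intro h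
    exact ⟨lt_of_lt_of_le hj (le_max_left _ _), fun _ => h⟩

lemma isDownStep_ge {x : Fin n → Bool} {j : ℕ} (hj : n ≤ j) :
    isDownStep x j ↔ j < 2 * wt x + 1 := by
  unfold isDownStep extLen
  constructor
  · rintro ⟨h1, -⟩
    rcases Nat.lt_or_ge j (2 * wt x + 1) with h | h
    · exact h
    · exfalso; rcases max_cases n (2 * wt x + 1) with ⟨he, -⟩ | ⟨he, -⟩ <;> omega
  · intro h
    refine ⟨lt_of_lt_of_le h (le_max_right _ _), fun hn => absurd hn (by omega)⟩

lemma down_le_Mx {x : Fin n → Bool} {j : ℕ} (h : isDownStep x j) : hgt x j ≤ Mx x := by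
  rcases le_or_gt j n with hj | hj
  · exact le_Mx x hj
  · have h1 : hgt x j = 2 * wt x - j := hgt_of_ge x (le_of_lt hj)
    have h2 := hgt_n x
    have := f_le_Mx x
    omega

lemma down_gt_n_lt {x : Fin n → Bool} {j : ℕ} (h : isDownStep x j) (hj : n < j) :
    hgt x j < hgt x n := by
  rw [hgt_of_ge x (le_of_lt hj), hgt_n x]
  omega

/-- a down-step at the maximum height is a visit (in `[0,n]`). -/
lemma down_at_Mx_mem_vis {x : Fin n → Bool} {j : ℕ} (h : isDownStep x j)
    (he : hgt x j = Mx x) : j ∈ vis x := by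
  rcases le_or_gt j n with hj | hj
  · exact mem_vis.2 ⟨hj, he⟩
  · have := down_gt_n_lt h hj
    have := f_le_Mx x
    omega

/-- every visit is an eligible down-step. -/
lemma vis_isDownStep {x : Fin n → Bool} {j : ℕ} (h : j ∈ vis x) : isDownStep x j := by
  rcases mem_vis.1 h with ⟨hj, he⟩
  rcases Nat.lt_or_ge j n with hjn | hjn
  · exact (isDownStep_lt hjn).2 (vis_down h hjn)
  · have hj' : j = n := le_antisymm hj hjn
    rw [hj'] at he ⊢
    rw [isDownStep_ge (le_refl n)]
    have h0 := Mx_nonneg x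
    have h1 := hgt_n x
    omega

/-! ### flip and unflip -/

lemma wt_lt_of_false {x : Fin n → Bool} {d : ℕ} (hd : d < n) (hx : x ⟨d, hd⟩ = false) :
    wt x < n := by
  unfold wt
  have h1 : (Finset.univ.filter fun i : Fin n => x i = true).card
      < (Finset.univ : Finset (Fin n)).card := by
    apply Finset.card_lt_card
    refine ⟨Finset.filter_subset _ _, fun hsub => ?_⟩
    have := hsub (Finset.mem_univ ⟨d, hd⟩)
    rw [Finset.mem_filter] at this
    rw [this.2] at hx
    exact Bool.noConfusion hx
  simpa using h1

lemma wt_flip {x : Fin n → Bool} {d : ℕ} (hd : d < n) (hx : x ⟨d, hd⟩ = false) :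
    wt (flip x d) = wt x + 1 := by
  unfold wt flip
  have : (Finset.univ.filter fun i : Fin n => (if i.val = d then true else x i) = true)
      = insert ⟨d, hd⟩ (Finset.univ.filter fun i : Fin n => x i = true) := by
    ext i
    simp only [Finset.mem_filter, Finset.mem_univ, true_and, Finset.mem_insert]
    by_cases h : i.val = d
    · have hi : i = ⟨d, hd⟩ := Fin.ext (by simpa using h)
      subst hi
      simp
    · simp only [h, if_false]
      constructor
      · exact fun h2 => Or.inr h2
      · rintro (hh | h2)
        · exact absurd (congrArg Fin.val hh) h
        · exact h2
  rw [this, Finset.card_insert_of_notMem (by simp [hx])]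

lemma onesUpTo_flip {x : Fin n → Bool} {d : ℕ} (hd : d < n) (hx : x ⟨d, hd⟩ = false) (j : ℕ) :
    onesUpTo (flip x d) j = onesUpTo x j + (if d < j then 1 else 0) := by
  unfold onesUpTo flip
  by_cases hdj : d < j
  · rw [if_pos hdj]
    have : (Finset.univ.filter fun i : Fin n => i.val < j ∧ (if i.val = d then true else x i) = true)
        = insert ⟨d, hd⟩ (Finset.univ.filter fun i : Fin n => i.val < j ∧ x i = true) := by
      ext i
      simp only [Finset.mem_filter, Finset.mem_univ, true_and, Finset.mem_insert]
      by_cases h : i.val = d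
      · have hi : i = ⟨d, hd⟩ := Fin.ext (by simpa using h)
        subst hi
        simp [hdj]
      · simp only [h, if_false]
        constructor
        · rintro ⟨h1, h2⟩; exact Or.inr ⟨h1, h2⟩
        · rintro (hh | ⟨h1, h2⟩)
          · exact absurd (congrArg Fin.val hh) h
          · exact ⟨h1, h2⟩
    rw [this, Finset.card_insert_of_notMem (by simp [hx])]
  · rw [if_neg hdj]
    have : (Finset.univ.filter fun i : Fin n => i.val < j ∧ (if i.val = d then true else x i) = true)
        = (Finset.univ.filter fun i : Fin n => i.val < j ∧ x i = true) := by
      ext i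
      simp only [Finset.mem_filter, Finset.mem_univ, true_and]
      by_cases h : i.val = d
      · simp [h]; omega
      · simp [h]
    rw [this]
    simp

lemma hgt_flip {x : Fin n → Bool} {d : ℕ} (hd : d < n) (hx : x ⟨d, hd⟩ = false) (j : ℕ) :
    hgt (flip x d) j = hgt x j + (if d < j then 2 else 0) := by
  unfold hgt
  rw [onesUpTo_flip hd hx j]
  by_cases hdj : d < j <;> simp [hdj] <;> push_cast <;> ring

lemma wt_unflip {y : Fin n → Bool} {d : ℕ} (hd : d < n) (hy : y ⟨d, hd⟩ = true) :
    wt (unflip y d) + 1 = wt y := by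
  have h1 : unflip y d ⟨d, hd⟩ = false := by simp [unflip]
  have h2 : flip (unflip y d) d = y := by
    funext t
    simp only [flip, unflip]
    by_cases h : t.val = d
    · simp [h, show t = ⟨d, hd⟩ from Fin.ext h, hy]
    · simp [h]
  have := wt_flip hd h1
  rw [h2] at this
  omega

lemma flip_unflip {y : Fin n → Bool} {d : ℕ} (hd : d < n) (hy : y ⟨d, hd⟩ = true) :
    flip (unflip y d) d = y := by
  funext t
  simp only [flip, unflip]
  by_cases h : t.val = d
  · simp [h, show t = ⟨d, hd⟩ from Fin.ext h, hy]
  · simp [h]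

lemma unflip_flip {x : Fin n → Bool} {d : ℕ} (hd : d < n) (hx : x ⟨d, hd⟩ = false) :
    unflip (flip x d) d = x := by
  funext t
  simp only [flip, unflip]
  by_cases h : t.val = d
  · simp [h, show t = ⟨d, hd⟩ from Fin.ext h, hx.symm]
  · simp [h]

lemma hgt_unflip {y : Fin n → Bool} {d : ℕ} (hd : d < n) (hy : y ⟨d, hd⟩ = true) (j : ℕ) :
    hgt (unflip y d) j = hgt y j - (if d < j then 2 else 0) := by
  have h1 : unflip y d ⟨d, hd⟩ = false := by simp [unflip]
  have := hgt_flip hd h1 j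
  rw [flip_unflip hd hy] at this
  omega

/-! ### discrete intermediate value -/

lemma hgt_ivt (x : Fin n → Bool) {j : ℕ} (hj : j ≤ n) {c : ℤ} (h0 : 0 ≤ c)
    (hc : c ≤ hgt x j) : ∃ s ≤ j, hgt x s = c := by
  induction j with
  | zero =>
    refine ⟨0, le_refl 0, ?_⟩
    rw [hgt_zero] at *
    omega
  | succ m ih =>
    rcases eq_or_lt_of_le hc with he | hlt
    · exact ⟨m + 1, le_refl _, he.symm⟩
    · have hmn : m < n := hj
      have hstep : hgt x (m+1) = hgt x m + 1 ∨ hgt x (m+1) = hgt x m - 1 := by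
        rcases Bool.eq_false_or_eq_true (x ⟨m, hmn⟩) with h | h
        · exact Or.inl (hgt_succ_true x hmn h)
        · exact Or.inr (hgt_succ_false x hmn h)
      have hc' : c ≤ hgt x m := by omega
      obtain ⟨s, hs, he⟩ := ih (le_of_lt hj) hc'
      exact ⟨s, le_trans hs (Nat.le_succ m), he⟩

end Lex1

namespace Lex1

variable {n : ℕ}

/-! ### the predecessor set `P` -/

lemma P_finite (x : Fin n → Bool) (d : ℕ) : (P x d).Finite := by
  apply Set.Finite.subset (Set.finite_Iio (extLen x))
  intro j hj
  exact hj.1.1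

lemma not_mem_P_self (x : Fin n → Bool) (d : ℕ) : d ∉ P x d := by
  rintro ⟨-, h | h⟩ <;> omega

lemma P_mono {x : Fin n → Bool} {a b : ℕ} (hab : a ∈ P x b) : insert a (P x a) ⊆ P x b := by
  intro j hj
  rcases Set.mem_insert_iff.1 hj with rfl | hj
  · exact hab
  · refine ⟨hj.1, ?_⟩
    rcases hj.2 with h | h <;> rcases hab.2 with h' | h' <;> omega

lemma P_card_lt {x : Fin n → Bool} {a b : ℕ} (hab : a ∈ P x b) :
    (P x a).ncard < (P x b).ncard := by
  have h1 : (insert a (P x a)).ncard = (P x a).ncard + 1 :=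
    Set.ncard_insert_of_notMem (not_mem_P_self x a) (P_finite x a)
  have h2 : (insert a (P x a)).ncard ≤ (P x b).ncard :=
    Set.ncard_le_ncard (P_mono hab) (P_finite x b)
  omega

lemma P_unique {x : Fin n → Bool} {d d' : ℕ} (hd : isDownStep x d) (hd' : isDownStep x d')
    (h1 : (P x d).ncard = 1) (h1' : (P x d').ncard = 1) : d = d' := by
  by_contra hne
  have htri : d ∈ P x d' ∨ d' ∈ P x d := by
    rcases lt_trichotomy (hgt x d) (hgt x d') with h | h | h
    · exact Or.inr ⟨hd', Or.inl h⟩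
    · rcases lt_or_gt_of_ne (fun hh : d = d' => hne hh) with hlt | hgt
      · exact Or.inr ⟨hd', Or.inr ⟨h.symm, hlt⟩⟩
      · exact Or.inl ⟨hd, Or.inr ⟨h, hgt⟩⟩
    · exact Or.inl ⟨hd, Or.inl h⟩
  rcases htri with h | h <;> have := P_card_lt h <;> omega

lemma two_le_ncard {s : Set ℕ} {a b : ℕ} (ha : a ∈ s) (hb : b ∈ s) (hab : a ≠ b)
    (hs : s.Finite) : 2 ≤ s.ncard := by
  have h1 : ({a, b} : Set ℕ) ⊆ s := by
    intro j hj; rcases hj with rfl | hj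
    · exact ha
    · exact Set.mem_singleton_iff.1 hj ▸ hb
  have h2 : ({a, b} : Set ℕ).ncard = 2 := Set.ncard_pair hab
  have := Set.ncard_le_ncard h1 hs
  omega

/-! ### case B : at least two visits to the maximum -/

lemma specB {x : Fin n → Bool} (hv : 2 ≤ (vis x).card) :
    upd x ∈ vis x ∧ upd x < lastIn (vis x) ∧
    (∀ j ∈ vis x, j ≠ lastIn (vis x) → j ≤ upd x) ∧
    P x (upd x) = {lastIn (vis x)} := by
  have hT : lastIn (vis x) ∈ vis x := lastIn_mem (vis_nonempty x)
  have hne : ((vis x).erase (lastIn (vis x))).Nonempty := by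
    rw [← Finset.card_pos, Finset.card_erase_of_mem hT]
    omega
  have hupd : upd x = lastIn ((vis x).erase (lastIn (vis x))) := if_pos hv
  have hdmem : upd x ∈ (vis x).erase (lastIn (vis x)) := hupd ▸ lastIn_mem hne
  have hdvis : upd x ∈ vis x := Finset.mem_of_mem_erase hdmem
  have hdne : upd x ≠ lastIn (vis x) := Finset.ne_of_mem_erase hdmem
  have hdlt : upd x < lastIn (vis x) := lt_of_le_of_ne (le_lastIn hdvis) hdne
  have hmaxle : ∀ j ∈ vis x, j ≠ lastIn (vis x) → j ≤ upd x := by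
    intro j hj hjne
    rw [hupd]
    exact le_lastIn (Finset.mem_erase.2 ⟨hjne, hj⟩)
  refine ⟨hdvis, hdlt, hmaxle, ?_⟩
  have hgtd : hgt x (upd x) = Mx x := (mem_vis.1 hdvis).2
  have hgtT : hgt x (lastIn (vis x)) = Mx x := (mem_vis.1 hT).2
  ext j
  simp only [Set.mem_singleton_iff]
  constructor
  · rintro ⟨hjds, hj⟩
    have hle : hgt x j ≤ Mx x := down_le_Mx hjds
    rcases hj with h | h
    · omega
    · have hjMx : hgt x j = Mx x := by omega
      have hjvis : j ∈ vis x := down_at_Mx_mem_vis hjds hjMx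
      by_contra hjne
      have := hmaxle j hjvis hjne
      omega
  · rintro rfl
    exact ⟨vis_isDownStep hT, Or.inr ⟨by omega, hdlt⟩⟩

/-! ### case C : unique visit to the maximum, final height at most `Mx - 2` -/

lemma specC {x : Fin n → Bool} (hv : (vis x).card = 1) (hm : hgt x n ≤ Mx x - 2) :
    lastIn (vis x) < upd x ∧ upd x < n ∧ hgt x (upd x) = Mx x - 1 ∧
    (∀ j ≤ n, hgt x j = Mx x - 1 → j ≤ upd x) ∧
    P x (upd x) = {lastIn (vis x)} := by
  obtain ⟨t, hvis⟩ := Finset.card_eq_one.1 hv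
  have htt : lastIn (vis x) = t := by rw [hvis]; exact lastIn_eq (by simp) (by simp)
  have htmem : t ∈ vis x := by rw [hvis]; simp
  have htn : t ≤ n := (mem_vis.1 htmem).1
  have hgtt : hgt x t = Mx x := (mem_vis.1 htmem).2
  have htltn : t < n := by
    rcases lt_or_eq_of_le htn with h | h
    · exact h
    · rw [h] at hgtt; omega
  have hxt : x ⟨t, htltn⟩ = false := vis_down htmem htltn
  have hsucc : hgt x (t+1) = Mx x - 1 := by rw [hgt_succ_false x htltn hxt, hgtt]
  have hne : (visAt x (Mx x - 1)).Nonempty :=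
    ⟨t+1, mem_visAt.2 ⟨Nat.succ_le_of_lt htltn, hsucc⟩⟩
  have hnotv : ¬ 2 ≤ (vis x).card := by omega
  have hupd : upd x = lastIn (visAt x (Mx x - 1)) := if_neg hnotv
  have hqmem : upd x ∈ visAt x (Mx x - 1) := hupd ▸ lastIn_mem hne
  have hqn : upd x ≤ n := (mem_visAt.1 hqmem).1
  have hgtq : hgt x (upd x) = Mx x - 1 := (mem_visAt.1 hqmem).2
  have hqmax : ∀ j ≤ n, hgt x j = Mx x - 1 → j ≤ upd x := by
    intro j hj he
    rw [hupd]
    exact le_lastIn (mem_visAt.2 ⟨hj, he⟩)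
  have htq : t < upd x := by
    have h1 : t + 1 ≤ upd x := by
      rw [hupd]
      exact le_lastIn (mem_visAt.2 ⟨Nat.succ_le_of_lt htltn, hsucc⟩)
    omega
  have hqltn : upd x < n := by
    rcases lt_or_eq_of_le hqn with h | h
    · exact h
    · rw [h] at hgtq; omega
  have hxq : x ⟨upd x, hqltn⟩ = false := by
    by_contra h
    have hx : x ⟨upd x, hqltn⟩ = true := by simpa using h
    have h1 := hgt_succ_true x hqltn hx
    rw [hgtq] at h1
    have h2 : upd x + 1 ∈ vis x := mem_vis.2 ⟨Nat.succ_le_of_lt hqltn, by omega⟩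
    rw [hvis, Finset.mem_singleton] at h2
    omega
  refine ⟨by omega, hqltn, hgtq, hqmax, ?_⟩
  ext j
  simp only [Set.mem_singleton_iff, htt]
  constructor
  · rintro ⟨hjds, hj⟩
    have hle : hgt x j ≤ Mx x := down_le_Mx hjds
    rcases hj with h | h
    · -- hgt x j > Mx x - 1, so hgt x j = Mx x, so j = t
      have hjMx : hgt x j = Mx x := by omega
      have := down_at_Mx_mem_vis hjds hjMx
      rwa [hvis, Finset.mem_singleton] at this
    · -- hgt x j = Mx x - 1 and j > upd x: impossible
      exfalso
      rcases le_or_gt j n with hjn | hjn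
      · have := hqmax j hjn (by omega)
        omega
      · have := down_gt_n_lt hjds hjn
        omega
  · rintro rfl
    exact ⟨vis_isDownStep htmem, Or.inl (by omega)⟩

/-! ### upd basic facts for matched vertices -/

lemma upd_lt_n {x : Fin n → Bool} (hm : matchedUp x) : upd x < n := by
  by_cases hv : 2 ≤ (vis x).card
  · have h := (specB hv).2.1
    have h1 := (mem_vis.1 (lastIn_mem (vis_nonempty x))).1
    omega
  · have hv1 : (vis x).card = 1 := by
      have := Finset.card_pos.2 (vis_nonempty x)
      omega
    exact (specC hv1 (hm.resolve_left hv)).2.1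

lemma upd_false {x : Fin n → Bool} (hm : matchedUp x) : x ⟨upd x, upd_lt_n hm⟩ = false := by
  by_cases hv : 2 ≤ (vis x).card
  · exact vis_down (specB hv).1 _
  · have hv1 : (vis x).card = 1 := by
      have := Finset.card_pos.2 (vis_nonempty x)
      omega
    have hf : hgt x n ≤ Mx x - 2 := hm.resolve_left hv
    have h := specC hv1 hf
    by_contra hh
    have hx : x ⟨upd x, upd_lt_n hm⟩ = true := by simpa using hh
    have h1 := hgt_succ_true x (upd_lt_n hm) hx
    rw [h.2.2.1] at h1
    have h2 : upd x + 1 ∈ vis x := mem_vis.2 ⟨Nat.succ_le_of_lt (upd_lt_n hm), by omega⟩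
    have h3 := (mem_vis.1 h2).2
    -- upd x + 1 is a visit to the max, but specC says lastIn vis < upd x and card = 1
    obtain ⟨t, hvis⟩ := Finset.card_eq_one.1 hv1
    have htt : lastIn (vis x) = t := by rw [hvis]; exact lastIn_eq (by simp) (by simp)
    rw [hvis, Finset.mem_singleton] at h2
    have := h.1
    omega

lemma P_upd {x : Fin n → Bool} (hm : matchedUp x) :
    P x (upd x) = {lastIn (vis x)} := by
  by_cases hv : 2 ≤ (vis x).card
  · exact (specB hv).2.2.2
  · have hv1 : (vis x).card = 1 := by
      have := Finset.card_pos.2 (vis_nonempty x)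
      omega
    exact (specC hv1 (hm.resolve_left hv)).2.2.2.2

/-! ### unmatched vertices admit no lexical up-edge -/

lemma unmatched_P {x : Fin n → Bool} (he : Even n) (hn : 0 < n) (hnm : ¬ matchedUp x)
    {d : ℕ} (hdn : d < n) (hds : isDownStep x d) : (P x d).ncard ≠ 1 := by
  have hv1 : (vis x).card = 1 := by
    have := Finset.card_pos.2 (vis_nonempty x)
    have : ¬ 2 ≤ (vis x).card := fun h => hnm (Or.inl h)
    omega
  have hfm : ¬ hgt x n ≤ Mx x - 2 := fun h => hnm (Or.inr h)
  have hfle := f_le_Mx x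
  obtain ⟨t, hvis⟩ := Finset.card_eq_one.1 hv1
  have htmem : t ∈ vis x := by rw [hvis]; simp
  have htn : t ≤ n := (mem_vis.1 htmem).1
  have hgtt : hgt x t = Mx x := (mem_vis.1 htmem).2
  have hfeven : ∃ w : ℤ, hgt x n = 2 * w := by
    obtain ⟨m, hnm2⟩ := he
    refine ⟨(wt x : ℤ) - m, ?_⟩
    rw [hgt_n x]
    have : (n : ℤ) = 2 * m := by exact_mod_cast (by omega : n = 2 * m)
    omega
  rcases eq_or_lt_of_le hfle with hfMx | hflt
  · -- f = Mx : unique visit is at n; {n, n+1} ⊆ P x d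
    have hMx1 : 1 ≤ Mx x := by
      -- Mx = f = 2wt - n; if Mx = 0 then 0 ∈ vis, so t = 0 and also n ∈ vis so t = n = 0
      rcases lt_or_eq_of_le (Mx_nonneg x) with h | h
      · omega
      · exfalso
        have h0 : (0 : ℕ) ∈ vis x := mem_vis.2 ⟨Nat.zero_le n, by rw [hgt_zero]; omega⟩
        have hnn : n ∈ vis x := mem_vis.2 ⟨le_refl n, hfMx⟩
        rw [hvis, Finset.mem_singleton] at h0 hnn
        omega
    have hwt : (n : ℤ) ≤ 2 * wt x - 1 := by
      have := hgt_n x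
      omega
    have hdown_n : isDownStep x n := (isDownStep_ge (le_refl n)).2 (by exact_mod_cast by omega)
    have hdown_n1 : isDownStep x (n+1) := (isDownStep_ge (Nat.le_succ n)).2 (by omega)
    have hdlt : hgt x d < Mx x := by
      rcases lt_or_eq_of_le (down_le_Mx hds) with h | h
      · exact h
      · exfalso
        have := down_at_Mx_mem_vis hds h
        rw [hvis, Finset.mem_singleton] at this
        have hnn : n ∈ vis x := mem_vis.2 ⟨le_refl n, hfMx⟩
        rw [hvis, Finset.mem_singleton] at hnn
        omega
    have hn_mem : n ∈ P x d := ⟨hdown_n, Or.inl (by omega)⟩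
    have hn1_mem : n + 1 ∈ P x d := by
      refine ⟨hdown_n1, ?_⟩
      have h1 : hgt x (n+1) = Mx x - 1 := by
        rw [hgt_of_ge x (Nat.le_succ n)]
        have := hgt_n x
        push_cast
        omega
      rcases lt_or_eq_of_le (show hgt x d ≤ Mx x - 1 by omega) with h | h
      · exact Or.inl (by omega)
      · exact Or.inr ⟨by omega, by omega⟩
    have := two_le_ncard hn_mem hn1_mem (by omega) (P_finite x d)
    omega
  · -- f = Mx - 1
    have hfMx : hgt x n = Mx x - 1 := by omega
    have hf0 : 0 ≤ hgt x n := by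
      obtain ⟨w, hw⟩ := hfeven
      have := Mx_nonneg x
      omega
    have htltn : t < n := by
      rcases lt_or_eq_of_le htn with h | h
      · exact h
      · rw [h] at hgtt; omega
    have hdown_n : isDownStep x n := by
      rw [isDownStep_ge (le_refl n)]
      have := hgt_n x
      omega
    by_cases hdt : d = t
    · -- P x d = ∅
      subst hdt
      have : P x d = ∅ := by
        ext j
        simp only [Set.mem_empty_iff_false, iff_false]
        rintro ⟨hjds, hj⟩
        have hle : hgt x j ≤ Mx x := down_le_Mx hjds
        rw [hgtt] at hj
        rcases hj with h | h
        · omega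
        · have hjvis : j ∈ vis x := down_at_Mx_mem_vis hjds (by omega)
          rw [hvis, Finset.mem_singleton] at hjvis
          omega
      rw [this]
      simp
    · have hdlt : hgt x d < Mx x := by
        rcases lt_or_eq_of_le (down_le_Mx hds) with h | h
        · exact h
        · exfalso
          have := down_at_Mx_mem_vis hds h
          rw [hvis, Finset.mem_singleton] at this
          exact hdt this
      have ht_mem : t ∈ P x d := ⟨vis_isDownStep htmem, Or.inl (by omega)⟩
      have hn_mem : n ∈ P x d := by
        refine ⟨hdown_n, ?_⟩
        rcases lt_or_eq_of_le (show hgt x d ≤ Mx x - 1 by omega) with h | h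
        · exact Or.inl (by omega)
        · exact Or.inr ⟨by omega, by omega⟩
      have := two_le_ncard ht_mem hn_mem (by omega) (P_finite x d)
      omega

/-! ### the equivalence with `lexUp` -/

lemma lexUp_iff {x y : Fin n → Bool} {k : ℕ} (he : Even n) (hn : 0 < n) :
    lexUp n k 1 x y ↔ wt x = k ∧ matchedUp x ∧ y = step x := by
  constructor
  · rintro ⟨hwt, d, hdn, hds, hcard, hy⟩
    have hm : matchedUp x := by
      by_contra hnm
      exact unmatched_P he hn hnm hdn hds (by simpa [P] using hcard)
    have hupd : (P x (upd x)).ncard = 1 := by rw [P_upd hm]; simp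
    have hdupd : d = upd x :=
      P_unique hds ((isDownStep_lt (upd_lt_n hm)).2 (upd_false hm)) (by simpa [P] using hcard) hupd
    subst hdupd
    exact ⟨hwt, hm, hy⟩
  · rintro ⟨hwt, hm, hy⟩
    refine ⟨hwt, upd x, upd_lt_n hm, (isDownStep_lt (upd_lt_n hm)).2 (upd_false hm), ?_, hy⟩
    have : P x (upd x) = {lastIn (vis x)} := P_upd hm
    simpa [P] using congrArg Set.ncard this

end Lex1

namespace Lex1

variable {n : ℕ}

lemma vis_singleton {x : Fin n → Bool} (hv : (vis x).card = 1) :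
    vis x = {lastIn (vis x)} := by
  obtain ⟨t, hvis⟩ := Finset.card_eq_one.1 hv
  have htt : lastIn (vis x) = t := by rw [hvis]; exact lastIn_eq (by simp) (by simp)
  rw [htt, hvis]

lemma wt_step {x : Fin n → Bool} (hm : matchedUp x) : wt (step x) = wt x + 1 :=
  wt_flip (upd_lt_n hm) (upd_false hm)

lemma hgt_step {x : Fin n → Bool} (hm : matchedUp x) (j : ℕ) :
    hgt (step x) j = hgt x j + (if upd x < j then 2 else 0) :=
  hgt_flip (upd_lt_n hm) (upd_false hm) j

/-- Transition from a vertex with at least two visits to its maximum. -/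
lemma TB {x : Fin n → Bool} (hv : 2 ≤ (vis x).card) :
    Mx (step x) = Mx x + 2 ∧ (vis (step x)).card = 1 ∧ pred (step x) = x := by
  have hm : matchedUp x := Or.inl hv
  obtain ⟨hdvis, hdlt, hmaxle, -⟩ := specB hv
  set d := upd x with hd
  set T := lastIn (vis x) with hT
  have hTvis : T ∈ vis x := lastIn_mem (vis_nonempty x)
  have hTn : T ≤ n := (mem_vis.1 hTvis).1
  have hgtT : hgt x T = Mx x := (mem_vis.1 hTvis).2
  have hgtd : hgt x d = Mx x := (mem_vis.1 hdvis).2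
  have hdn : d < n := upd_lt_n hm
  have hy := hgt_step hm
  have hMx : Mx (step x) = Mx x + 2 := by
    apply Mx_eq_of
    · intro j hj
      rw [hy j]
      have := le_Mx x hj
      by_cases h : d < j <;> simp [h] <;> omega
    · exact ⟨T, hTn, by rw [hy T, if_pos hdlt]; omega⟩
  have hvisy : vis (step x) = {T} := by
    ext j
    rw [mem_vis, hMx, Finset.mem_singleton]
    constructor
    · rintro ⟨hjn, hje⟩
      rw [hy j] at hje
      by_cases h : d < j
      · rw [if_pos h] at hje
        have hjvis : j ∈ vis x := mem_vis.2 ⟨hjn, by omega⟩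
        by_contra hne
        have := hmaxle j hjvis hne
        omega
      · rw [if_neg h] at hje
        have := le_Mx x hjn
        omega
    · rintro rfl
      exact ⟨hTn, by rw [hy T, if_pos hdlt]; omega⟩
  have hcard1 : (vis (step x)).card = 1 := by rw [hvisy]; simp
  refine ⟨hMx, hcard1, ?_⟩
  -- the reconstruction: dflip (step x) = d
  have hd1 : hgt x (d+1) = Mx x - 1 := by
    rw [hgt_succ_false x hdn (upd_false hm)]; omega
  have hd1n : d + 1 ≤ n := Nat.succ_le_of_lt hdn
  have hfirst : firstIn (visAt (step x) (Mx (step x) - 1)) = d + 1 := by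
    apply firstIn_eq
    · rw [mem_visAt, hMx, hy (d+1), if_pos (Nat.lt_succ_self d)]
      exact ⟨hd1n, by omega⟩
    · intro b hb
      rcases mem_visAt.1 hb with ⟨hbn, hbe⟩
      rw [hMx, hy b] at hbe
      by_cases h : d < b
      · omega
      · rw [if_neg h] at hbe
        have := le_Mx x hbn
        omega
  have hdflip : dflip (step x) = d := by
    unfold dflip
    rw [if_neg (by omega), hfirst]
    omega
  unfold pred
  rw [hdflip]
  exact unflip_flip hdn (upd_false hm)

/-- Transition from a vertex with a unique visit to its maximum. -/
lemma TC {x : Fin n → Bool} (hv : (vis x).card = 1) (hf : hgt x n ≤ Mx x - 2) :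
    Mx (step x) = Mx x ∧ 2 ≤ (vis (step x)).card ∧ pred (step x) = x := by
  have hm : matchedUp x := Or.inr hf
  obtain ⟨htq, hqn, hgtq, hqmax, -⟩ := specC hv hf
  set q := upd x with hq
  set t := lastIn (vis x) with ht
  have hvis : vis x = {t} := vis_singleton hv
  have htvis : t ∈ vis x := lastIn_mem (vis_nonempty x)
  have htn : t ≤ n := (mem_vis.1 htvis).1
  have hgtt : hgt x t = Mx x := (mem_vis.1 htvis).2
  have hy := hgt_step hm
  have hq1 : hgt x (q+1) = Mx x - 2 := by
    rw [hgt_succ_false x hqn (upd_false hm)]; omega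
  have hq1n : q + 1 ≤ n := Nat.succ_le_of_lt hqn
  have hbound : ∀ j ≤ n, q < j → hgt x j ≤ Mx x - 2 := by
    intro j hjn hqj
    have h1 := le_Mx x hjn
    rcases eq_or_lt_of_le h1 with h | h
    · exfalso
      have : j ∈ vis x := mem_vis.2 ⟨hjn, h⟩
      rw [hvis, Finset.mem_singleton] at this
      omega
    · rcases eq_or_lt_of_le (show hgt x j ≤ Mx x - 1 by omega) with h2 | h2
      · exfalso
        have := hqmax j hjn h2
        omega
      · omega
  have hMx : Mx (step x) = Mx x := by
    apply Mx_eq_of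
    · intro j hj
      rw [hy j]
      by_cases h : q < j
      · rw [if_pos h]
        have := hbound j hj h
        omega
      · rw [if_neg h]
        have := le_Mx x hj
        omega
    · exact ⟨t, htn, by rw [hy t, if_neg (by omega)]; omega⟩
  have htvisy : t ∈ vis (step x) := by
    rw [mem_vis, hMx, hy t, if_neg (by omega)]
    exact ⟨htn, by omega⟩
  have hq1visy : q + 1 ∈ vis (step x) := by
    rw [mem_vis, hMx, hy (q+1), if_pos (Nat.lt_succ_self q)]
    exact ⟨hq1n, by omega⟩
  have hcard : 2 ≤ (vis (step x)).card :=
    Finset.one_lt_card.2 ⟨t, htvisy, q+1, hq1visy, by omega⟩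
  refine ⟨hMx, hcard, ?_⟩
  have hfirst : firstIn (vis (step x)) = t := by
    apply firstIn_eq htvisy
    intro b hb
    rcases mem_vis.1 hb with ⟨hbn, hbe⟩
    rw [hMx, hy b] at hbe
    by_cases h : q < b
    · omega
    · rw [if_neg h] at hbe
      have : b ∈ vis x := mem_vis.2 ⟨hbn, by omega⟩
      rw [hvis, Finset.mem_singleton] at this
      omega
  have hsecond : firstIn ((vis (step x)).erase t) = q + 1 := by
    apply firstIn_eq
    · exact Finset.mem_erase.2 ⟨by omega, hq1visy⟩
    · intro b hb
      rcases Finset.mem_erase.1 hb with ⟨hbt, hb⟩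
      rcases mem_vis.1 hb with ⟨hbn, hbe⟩
      rw [hMx, hy b] at hbe
      by_cases h : q < b
      · omega
      · exfalso
        rw [if_neg h] at hbe
        have : b ∈ vis x := mem_vis.2 ⟨hbn, by omega⟩
        rw [hvis, Finset.mem_singleton] at this
        omega
  have hdflip : dflip (step x) = q := by
    unfold dflip
    rw [if_pos hcard, hfirst, hsecond]
    omega
  unfold pred
  rw [hdflip]
  exact unflip_flip hqn (upd_false hm)

/-- A vertex reached by a matching step is never a bottom. -/
lemma step_not_bottom {x : Fin n → Bool} (hm : matchedUp x) : ¬ isBottom (step x) := by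
  by_cases hv : 2 ≤ (vis x).card
  · obtain ⟨hMx, -, -⟩ := TB hv
    rintro ⟨-, h⟩
    have := Mx_nonneg x
    omega
  · have hv1 : (vis x).card = 1 := by
      have := Finset.card_pos.2 (vis_nonempty x)
      omega
    obtain ⟨-, hc, -⟩ := TC hv1 (hm.resolve_left hv)
    rintro ⟨h1, -⟩
    omega

lemma pred_step {x : Fin n → Bool} (hm : matchedUp x) : pred (step x) = x := by
  by_cases hv : 2 ≤ (vis x).card
  · exact (TB hv).2.2
  · have hv1 : (vis x).card = 1 := by
      have := Finset.card_pos.2 (vis_nonempty x)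
      omega
    exact (TC hv1 (hm.resolve_left hv)).2.2

end Lex1

namespace Lex1

variable {n : ℕ}

/-- Reconstruction: a vertex with at least two visits to its maximum is matched downward. -/
lemma recB {y : Fin n → Bool} (hv : 2 ≤ (vis y).card) :
    matchedUp (pred y) ∧ step (pred y) = y ∧ wt y = wt (pred y) + 1 := by
  set T1 := firstIn (vis y) with hT1
  set T2 := firstIn ((vis y).erase T1) with hT2
  have hT1vis : T1 ∈ vis y := firstIn_mem (vis_nonempty y)
  have hne : ((vis y).erase T1).Nonempty := by
    rw [← Finset.card_pos, Finset.card_erase_of_mem hT1vis]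
    omega
  have hT2mem : T2 ∈ (vis y).erase T1 := firstIn_mem hne
  have hT2vis : T2 ∈ vis y := Finset.mem_of_mem_erase hT2mem
  have hT2ne : T2 ≠ T1 := Finset.ne_of_mem_erase hT2mem
  have hT1T2 : T1 < T2 := lt_of_le_of_ne (firstIn_le hT2vis) (Ne.symm hT2ne)
  have hT2n : T2 ≤ n := (mem_vis.1 hT2vis).1
  have hgtT2 : hgt y T2 = Mx y := (mem_vis.1 hT2vis).2
  have hgtT1 : hgt y T1 = Mx y := (mem_vis.1 hT1vis).2
  have hT2min : ∀ j ∈ vis y, j ≠ T1 → T2 ≤ j := by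
    intro j hj hjne
    exact firstIn_le (Finset.mem_erase.2 ⟨hjne, hj⟩)
  have hT2pos : 1 ≤ T2 := by omega
  set δ := T2 - 1 with hδ
  have hδT2 : δ + 1 = T2 := by omega
  have hδn : δ < n := by omega
  have hyδ : y ⟨δ, hδn⟩ = true := by
    by_contra h
    have hf : y ⟨δ, hδn⟩ = false := by simpa using h
    have h1 := hgt_succ_false y hδn hf
    rw [hδT2, hgtT2] at h1
    have := le_Mx y (le_of_lt hδn)
    omega
  have hgtδ : hgt y δ = Mx y - 1 := by
    have h1 := hgt_succ_true y hδn hyδ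
    rw [hδT2, hgtT2] at h1
    omega
  have hdflip : dflip y = δ := by
    unfold dflip
    rw [if_pos hv]
    try omega
  have hpred : pred y = unflip y δ := by rw [pred, hdflip]
  set w := unflip y δ with hw
  have hgtw : ∀ j, hgt w j = hgt y j - (if δ < j then 2 else 0) := hgt_unflip hδn hyδ
  have hMxw : Mx w = Mx y := by
    apply Mx_eq_of
    · intro j hj
      rw [hgtw j]
      have := le_Mx y hj
      by_cases h : δ < j <;> simp [h] <;> omega
    · refine ⟨T1, le_trans (le_of_lt (lt_of_lt_of_le hT1T2 hT2n)) (le_refl n), ?_⟩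
      rw [hgtw T1, if_neg (by omega)]
      omega
  have hvisw : vis w = {T1} := by
    ext j
    rw [mem_vis, hMxw, Finset.mem_singleton]
    constructor
    · rintro ⟨hjn, hje⟩
      rw [hgtw j] at hje
      by_cases h : δ < j
      · rw [if_pos h] at hje
        have := le_Mx y hjn
        omega
      · rw [if_neg h] at hje
        have hjvis : j ∈ vis y := mem_vis.2 ⟨hjn, by omega⟩
        by_contra hjne
        have := hT2min j hjvis hjne
        omega
    · rintro rfl
      refine ⟨by omega, ?_⟩
      rw [hgtw T1, if_neg (by omega)]
      omega
  have hcardw : (vis w).card = 1 := by rw [hvisw]; simp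
  have hfw : hgt w n = hgt y n - 2 := by
    rw [hgtw n, if_pos hδn]
  have hmw : matchedUp w := by
    right
    rw [hfw, hMxw]
    have := f_le_Mx y
    omega
  have hupdw : upd w = δ := by
    have hnotv : ¬ 2 ≤ (vis w).card := by omega
    rw [upd, if_neg hnotv]
    apply lastIn_eq
    · rw [mem_visAt, hMxw]
      refine ⟨le_of_lt hδn, ?_⟩
      rw [hgtw δ, if_neg (by omega)]
      omega
    · intro b hb
      rcases mem_visAt.1 hb with ⟨hbn, hbe⟩
      rw [hMxw, hgtw b] at hbe
      by_cases h : δ < b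
      · exfalso
        rw [if_pos h] at hbe
        have := le_Mx y hbn
        omega
      · omega
  have hstepw : step w = y := by
    rw [step, hupdw, hw]
    exact flip_unflip hδn hyδ
  rw [hpred]
  exact ⟨hmw, hstepw, (wt_unflip hδn hyδ).symm ▸ rfl⟩

/-- Reconstruction: a vertex with a unique visit to a maximum `≥ 2` is matched downward. -/
lemma recC {y : Fin n → Bool} (hv : (vis y).card = 1) (hM : 2 ≤ Mx y) :
    matchedUp (pred y) ∧ step (pred y) = y ∧ wt y = wt (pred y) + 1 := by
  set T := lastIn (vis y) with hT
  have hvis : vis y = {T} := vis_singleton hv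
  have hTvis : T ∈ vis y := lastIn_mem (vis_nonempty y)
  have hTn : T ≤ n := (mem_vis.1 hTvis).1
  have hgtT : hgt y T = Mx y := (mem_vis.1 hTvis).2
  -- the first visit to `Mx y - 1`
  have hexists : ∃ s ≤ T, hgt y s = Mx y - 1 := hgt_ivt y hTn (by omega) (by omega)
  obtain ⟨s, hsT, hse⟩ := hexists
  have hsn : s ≤ n := le_trans hsT hTn
  have hSne : (visAt y (Mx y - 1)).Nonempty := ⟨s, mem_visAt.2 ⟨hsn, hse⟩⟩
  set S := firstIn (visAt y (Mx y - 1)) with hS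
  have hSmem : S ∈ visAt y (Mx y - 1) := firstIn_mem hSne
  have hSn : S ≤ n := (mem_visAt.1 hSmem).1
  have hgtS : hgt y S = Mx y - 1 := (mem_visAt.1 hSmem).2
  have hSmin : ∀ j ≤ n, hgt y j = Mx y - 1 → S ≤ j := by
    intro j hj he
    exact firstIn_le (mem_visAt.2 ⟨hj, he⟩)
  have hSs : S ≤ s := firstIn_le (mem_visAt.2 ⟨hsn, hse⟩)
  have hST : S ≤ T := le_trans hSs hsT
  have hSpos : 1 ≤ S := by
    by_contra h
    have h0 : S = 0 := by omega
    rw [h0, hgt_zero] at hgtS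
    omega
  set δ := S - 1 with hδ
  have hδS : δ + 1 = S := by omega
  have hδT : δ < T := by omega
  have hδn : δ < n := by omega
  have hyδ : y ⟨δ, hδn⟩ = true := by
    by_contra h
    have hf : y ⟨δ, hδn⟩ = false := by simpa using h
    have h1 := hgt_succ_false y hδn hf
    rw [hδS, hgtS] at h1
    -- then hgt y δ = Mx y, so δ ∈ vis y = {T}, contradiction with δ < T
    have : δ ∈ vis y := mem_vis.2 ⟨le_of_lt hδn, by omega⟩
    rw [hvis, Finset.mem_singleton] at this
    omega
  have hgtδ : hgt y δ = Mx y - 2 := by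
    have h1 := hgt_succ_true y hδn hyδ
    rw [hδS, hgtS] at h1
    omega
  have hdflip : dflip y = δ := by
    unfold dflip
    rw [if_neg (by omega)]
    try omega
  have hpred : pred y = unflip y δ := by rw [pred, hdflip]
  set w := unflip y δ with hw
  have hgtw : ∀ j, hgt w j = hgt y j - (if δ < j then 2 else 0) := hgt_unflip hδn hyδ
  have hbound : ∀ j ≤ n, ¬ δ < j → hgt y j ≤ Mx y - 2 := by
    intro j hjn h
    have h1 := le_Mx y hjn
    rcases eq_or_lt_of_le h1 with h2 | h2
    · exfalso
      have : j ∈ vis y := mem_vis.2 ⟨hjn, h2⟩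
      rw [hvis, Finset.mem_singleton] at this
      omega
    · rcases eq_or_lt_of_le (show hgt y j ≤ Mx y - 1 by omega) with h3 | h3
      · exfalso
        have := hSmin j hjn h3
        omega
      · omega
  have hMxw : Mx w = Mx y - 2 := by
    apply Mx_eq_of
    · intro j hj
      rw [hgtw j]
      by_cases h : δ < j
      · rw [if_pos h]
        have := le_Mx y hj
        omega
      · rw [if_neg h]
        have := hbound j hj h
        omega
    · refine ⟨δ, le_of_lt hδn, ?_⟩
      rw [hgtw δ, if_neg (by omega)]
      omega
  have hδvisw : δ ∈ vis w := by
    rw [mem_vis, hMxw, hgtw δ, if_neg (by omega)]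
    exact ⟨le_of_lt hδn, by omega⟩
  have hTvisw : T ∈ vis w := by
    rw [mem_vis, hMxw, hgtw T, if_pos hδT]
    exact ⟨hTn, by omega⟩
  have hcardw : 2 ≤ (vis w).card :=
    Finset.one_lt_card.2 ⟨δ, hδvisw, T, hTvisw, by omega⟩
  have hmw : matchedUp w := Or.inl hcardw
  have hlast : lastIn (vis w) = T := by
    apply lastIn_eq hTvisw
    intro b hb
    rcases mem_vis.1 hb with ⟨hbn, hbe⟩
    rw [hMxw, hgtw b] at hbe
    by_cases h : δ < b
    · rw [if_pos h] at hbe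
      have : b ∈ vis y := mem_vis.2 ⟨hbn, by omega⟩
      rw [hvis, Finset.mem_singleton] at this
      omega
    · omega
  have hsnd : lastIn ((vis w).erase T) = δ := by
    apply lastIn_eq
    · exact Finset.mem_erase.2 ⟨by omega, hδvisw⟩
    · intro b hb
      rcases Finset.mem_erase.1 hb with ⟨hbT, hb⟩
      rcases mem_vis.1 hb with ⟨hbn, hbe⟩
      rw [hMxw, hgtw b] at hbe
      by_cases h : δ < b
      · exfalso
        rw [if_pos h] at hbe
        have : b ∈ vis y := mem_vis.2 ⟨hbn, by omega⟩
        rw [hvis, Finset.mem_singleton] at this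
        omega
      · omega
  have hupdw : upd w = δ := by
    rw [upd, if_pos hcardw, hlast, hsnd]
  have hstepw : step w = y := by
    rw [step, hupdw, hw]
    exact flip_unflip hδn hyδ
  rw [hpred]
  exact ⟨hmw, hstepw, (wt_unflip hδn hyδ).symm ▸ rfl⟩

/-- Every non-bottom vertex is matched downward, via `pred`. -/
lemma exists_pred {y : Fin n → Bool} (hnb : ¬ isBottom y) :
    matchedUp (pred y) ∧ step (pred y) = y ∧ wt y = wt (pred y) + 1 := by
  by_cases hv : 2 ≤ (vis y).card
  · exact recB hv
  · have hv1 : (vis y).card = 1 := by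
      have := Finset.card_pos.2 (vis_nonempty y)
      omega
    have hM : 2 ≤ Mx y := by
      by_contra h
      exact hnb ⟨hv1, by omega⟩
    exact recC hv1 hM

end Lex1

namespace Lex1

variable {n : ℕ}

noncomputable def chainOf (b : Fin n → Bool) : List (Fin n → Bool) :=
  (List.range (n - 2 * wt b + 1)).map (fun i => step^[i] b)

lemma chainOf_length (b : Fin n → Bool) : (chainOf b).length = n - 2 * wt b + 1 := by
  simp [chainOf]

lemma chainOf_get (b : Fin n → Bool) (i : ℕ) (h : i < (chainOf b).length) :
    (chainOf b).get ⟨i, h⟩ = step^[i] b := by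
  simp only [chainOf, List.get_eq_getElem, List.getElem_map, List.getElem_range]

lemma mem_chainOf {b x : Fin n → Bool} :
    x ∈ chainOf b ↔ ∃ i ≤ n - 2 * wt b, step^[i] b = x := by
  simp only [chainOf, List.mem_map, List.mem_range, Nat.lt_succ_iff]

lemma bottom_wt {b : Fin n → Bool} (he : Even n) (hb : isBottom b) : 2 * wt b ≤ n := by
  have h1 : hgt b n = 2 * (wt b : ℤ) - n := hgt_n b
  have h2 := f_le_Mx b
  have h3 := hb.2
  obtain ⟨m, hm⟩ := he
  have hmz : (n : ℤ) = 2 * m := by exact_mod_cast (by omega : n = 2 * m)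
  -- 2 wt b - n ≤ 1 and even, hence ≤ 0
  have : 2 * (wt b : ℤ) - n ≤ 1 := by omega
  have : 2 * (wt b : ℤ) ≤ n := by omega
  exact_mod_cast this

lemma even_L {b : Fin n → Bool} (he : Even n) (hb : isBottom b) :
    (n - 2 * wt b) % 2 = 0 := by
  have h := bottom_wt he hb
  obtain ⟨m, hm⟩ := he
  omega

/-- The main iteration invariant along a chain starting at a bottom vertex. -/
lemma iter {b : Fin n → Bool} (he : Even n) (hb : isBottom b) :
    ∀ i ≤ n - 2 * wt b,
      wt (step^[i] b) = wt b + i ∧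
      (i % 2 = 0 → (vis (step^[i] b)).card = 1 ∧ Mx (step^[i] b) = Mx b + i) ∧
      (i % 2 = 1 → 2 ≤ (vis (step^[i] b)).card ∧ Mx (step^[i] b) = Mx b + i - 1) ∧
      (i < n - 2 * wt b → matchedUp (step^[i] b)) := by
  have hL2 : 2 * wt b ≤ n := bottom_wt he hb
  have hLe : (n - 2 * wt b) % 2 = 0 := even_L he hb
  have hMb0 : 0 ≤ Mx b := Mx_nonneg b
  have hMb1 : Mx b ≤ 1 := hb.2
  -- auxiliary: f of an iterate in terms of its weight
  have hgtn : ∀ z : Fin n → Bool, hgt z n = 2 * (wt z : ℤ) - n := fun z => hgt_n z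
  intro i
  induction i with
  | zero =>
    intro _
    simp only [Function.iterate_zero_apply]
    refine ⟨by omega, fun _ => ⟨hb.1, by simp⟩, fun h => by omega, fun hlt => ?_⟩
    right
    rw [hgtn b]
    have h1 : (2 : ℤ) * wt b + 2 ≤ n := by
      have : 2 ≤ n - 2 * wt b := by omega
      have : 2 * wt b + 2 ≤ n := by omega
      exact_mod_cast this
    omega
  | succ m ih =>
    intro hm1
    have hmL : m ≤ n - 2 * wt b := by omega
    have hmlt : m < n - 2 * wt b := by omega
    obtain ⟨hwt, hev, hod, hmat⟩ := ih hmL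
    have hmatched : matchedUp (step^[m] b) := hmat hmlt
    have hstep : step^[m+1] b = step (step^[m] b) := Function.iterate_succ_apply' step m b
    have hwt1 : wt (step^[m+1] b) = wt b + (m+1) := by
      rw [hstep, wt_step hmatched, hwt]
      try omega
    refine ⟨hwt1, ?_, ?_, ?_⟩
    · -- m+1 even, so m odd
      intro hpar
      have hmodd : m % 2 = 1 := by omega
      obtain ⟨hcard, hMx⟩ := hod hmodd
      obtain ⟨h1, h2, -⟩ := TB hcard
      refine ⟨by rw [hstep]; exact h2, ?_⟩
      rw [hstep, h1, hMx]
      push_cast; ring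
    · -- m+1 odd, so m even
      intro hpar
      have hmev : m % 2 = 0 := by omega
      obtain ⟨hcard, hMx⟩ := hev hmev
      have hf : hgt (step^[m] b) n ≤ Mx (step^[m] b) - 2 := by
        rcases hmatched with hv | hf
        · omega
        · exact hf
      obtain ⟨h1, h2, -⟩ := TC hcard hf
      refine ⟨by rw [hstep]; exact h2, ?_⟩
      rw [hstep, h1, hMx]
      push_cast; ring
    · -- matchedness of step m+1 if m+1 < L
      intro hlt
      by_cases hpar : (m+1) % 2 = 1
      · -- odd: at least 2 visits
        have hmev : m % 2 = 0 := by omega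
        obtain ⟨hcard, -⟩ := hev hmev
        have hf : hgt (step^[m] b) n ≤ Mx (step^[m] b) - 2 := by
          rcases hmatched with hv | hf
          · omega
          · exact hf
        obtain ⟨-, h2, -⟩ := TC hcard hf
        rw [hstep]
        exact Or.inl h2
      · -- even: card 1, use height bound
        have hmodd : m % 2 = 1 := by omega
        obtain ⟨hcard, hMx⟩ := hod hmodd
        obtain ⟨h1, h2, -⟩ := TB hcard
        rw [hstep]
        right
        rw [h1, hMx]
        have hfz : hgt (step (step^[m] b)) n = 2 * ((wt b : ℤ) + (m+1)) - n := by
          rw [← hstep, hgtn (step^[m+1] b), hwt1]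
          push_cast; ring
        rw [hfz]
        -- m+1 ≤ L - 2 since m+1 < L and both even
        have hmle : m + 1 + 2 ≤ n - 2 * wt b := by omega
        have hcast : (2 : ℤ) * wt b + (m + 1) + 2 ≤ n := by
          have : 2 * wt b + (m + 1) + 2 ≤ n := by omega
          exact_mod_cast this
        omega

lemma top_unmatched {b : Fin n → Bool} (he : Even n) (hb : isBottom b) :
    ¬ matchedUp (step^[n - 2 * wt b] b) := by
  have hL2 : 2 * wt b ≤ n := bottom_wt he hb
  have hLe : (n - 2 * wt b) % 2 = 0 := even_L he hb
  obtain ⟨hwt, hev, -, -⟩ := iter he hb (n - 2 * wt b) (le_refl _)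
  obtain ⟨hcard, hMx⟩ := hev hLe
  rintro (hv | hf)
  · omega
  · rw [hgt_n, hwt, hMx] at hf
    have hb2 := hb.2
    omega

lemma rep_unique (he : Even n) :
    ∀ i {b b' : Fin n → Bool} i', isBottom b → isBottom b' → i ≤ n - 2 * wt b →
      i' ≤ n - 2 * wt b' → step^[i] b = step^[i'] b' → i = i' ∧ b = b' := by
  intro i
  induction i with
  | zero =>
    intro b b' i' hb hb' hi hi' heq
    cases i' with
    | zero => exact ⟨rfl, by simpa using heq⟩
    | succ m =>
      exfalso
      have hmat : matchedUp (step^[m] b') := (iter he hb' m (by omega)).2.2.2 (by omega)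
      have : b = step (step^[m] b') := by
        rw [← Function.iterate_succ_apply' step m b']
        simpa using heq
      exact step_not_bottom hmat (this ▸ hb)
  | succ m ih =>
    intro b b' i' hb hb' hi hi' heq
    cases i' with
    | zero =>
      exfalso
      have hmat : matchedUp (step^[m] b) := (iter he hb m (by omega)).2.2.2 (by omega)
      have : b' = step (step^[m] b) := by
        rw [← Function.iterate_succ_apply' step m b]
        simpa using heq.symm
      exact step_not_bottom hmat (this ▸ hb')
    | succ m' =>
      have hmatm : matchedUp (step^[m] b) := (iter he hb m (by omega)).2.2.2 (by omega)
      have hmatm' : matchedUp (step^[m'] b') := (iter he hb' m' (by omega)).2.2.2 (by omega)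
      have heq2 : step^[m] b = step^[m'] b' := by
        have h1 : pred (step (step^[m] b)) = pred (step (step^[m'] b')) := by
          rw [← Function.iterate_succ_apply' step m b, ← Function.iterate_succ_apply' step m' b']
          rw [heq]
        rwa [pred_step hmatm, pred_step hmatm'] at h1
      obtain ⟨h1, h2⟩ := ih m' hb hb' (by omega) (by omega) heq2
      exact ⟨by omega, h2⟩

lemma rep_exists (he : Even n) (x : Fin n → Bool) :
    ∃ b i, isBottom b ∧ i ≤ n - 2 * wt b ∧ step^[i] b = x := by
  obtain ⟨N, hN⟩ : ∃ N, wt x ≤ N := ⟨wt x, le_refl _⟩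
  induction N generalizing x with
  | zero =>
    by_cases hbx : isBottom x
    · exact ⟨x, 0, hbx, Nat.zero_le _, rfl⟩
    · obtain ⟨-, -, hw⟩ := exists_pred hbx
      omega
  | succ N ih =>
    by_cases hbx : isBottom x
    · exact ⟨x, 0, hbx, Nat.zero_le _, rfl⟩
    · obtain ⟨hmw, hsw, hw⟩ := exists_pred hbx
      obtain ⟨b, i, hb, hi, he2⟩ := ih (pred x) (by omega)
      have hilt : i < n - 2 * wt b := by
        rcases lt_or_eq_of_le hi with h | h
        · exact h
        · exfalso
          apply top_unmatched he hb
          rw [← h, he2]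
          exact hmw
      refine ⟨b, i + 1, hb, by omega, ?_⟩
      rw [Function.iterate_succ_apply' step i b, he2, hsw]

lemma matched_wt_lt {x : Fin n → Bool} (hm : matchedUp x) : wt x < n :=
  wt_lt_of_false (upd_lt_n hm) (upd_false hm)

lemma cube_adj_step {x : Fin n → Bool} (hm : matchedUp x) : (cube n).Adj x (step x) := by
  show hammingDist x (step x) = 1
  rw [hammingDist]
  rw [show (Finset.univ.filter fun i : Fin n => x i ≠ step x i) = {⟨upd x, upd_lt_n hm⟩} from ?_]
  · simp
  · ext i
    simp only [Finset.mem_filter, Finset.mem_univ, true_and, Finset.mem_singleton]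
    constructor
    · intro hne
      by_contra hii
      apply hne
      have : i.val ≠ upd x := fun h => hii (Fin.ext h)
      simp [step, flip, this]
    · rintro rfl
      rw [upd_false hm]
      simp [step, flip]

end Lex1


namespace Lex1

variable {n : ℕ}

def Dscd (n : ℕ) : Set (List (Fin n → Bool)) := {c | ∃ b, isBottom b ∧ c = chainOf b}

lemma symchain (he : Even n) {b : Fin n → Bool} (hb : isBottom b) :
    IsSymChain n (chainOf b) := by
  have hL2 : 2 * wt b ≤ n := bottom_wt he hb
  have hlen : (chainOf b).length = n - 2 * wt b + 1 := chainOf_length b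
  refine ⟨?_, ?_, wt b, ?_, ?_⟩
  · intro h
    rw [h] at hlen
    simp at hlen
  · change List.IsChain (cube n).Adj (chainOf b)
    rw [List.isChain_iff_getElem]
    intro i hi
    change (cube n).Adj ((chainOf b).get ⟨i, by omega⟩) ((chainOf b).get ⟨i+1, hi⟩)
    rw [hlen] at hi
    have hiL : i < n - 2 * wt b := by omega
    rw [chainOf_get b i (by omega), chainOf_get b (i+1) (by rw [hlen]; omega)]
    have hmx : matchedUp (step^[i] b) := (iter he hb i (by omega)).2.2.2 hiL
    rw [Function.iterate_succ_apply' step i b]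
    exact cube_adj_step hmx
  · intro i hi
    rw [chainOf_get b i hi]
    exact (iter he hb i (by rw [hlen] at hi; omega)).1
  · rw [hlen]
    omega

lemma isSCD (he : Even n) : IsSCD n (Dscd n) := by
  constructor
  · rintro c ⟨b, hb, rfl⟩
    exact symchain he hb
  · intro x
    obtain ⟨b, i, hb, hi, hix⟩ := rep_exists he x
    refine ⟨chainOf b, ⟨⟨b, hb, rfl⟩, mem_chainOf.2 ⟨i, hi, hix⟩⟩, ?_⟩
    rintro c ⟨⟨b', hb', rfl⟩, hxc⟩
    obtain ⟨i', hi', hix'⟩ := mem_chainOf.1 hxc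
    obtain ⟨-, hbb⟩ := rep_unique he i' i hb' hb hi' hi (hix'.trans hix.symm)
    rw [hbb]

lemma edges_eq (he : Even n) (hn : 0 < n) :
    scdEdges (Dscd n) = {e : Sym2 (Fin n → Bool) |
      ∃ k < n, ∃ x y : Fin n → Bool, lexUp n k 1 x y ∧ e = s(x, y)} := by
  ext e
  constructor
  · intro hmem
    obtain ⟨c, ⟨b, hb, rfl⟩, hce⟩ := Set.mem_iUnion₂.1 hmem
    obtain ⟨i, hilen, he2⟩ := hce
    rw [chainOf_length] at hilen
    have hiL : i < n - 2 * wt b := by omega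
    have hmx : matchedUp (step^[i] b) := (iter he hb i (by omega)).2.2.2 hiL
    refine ⟨wt (step^[i] b), matched_wt_lt hmx, step^[i] b, step (step^[i] b),
      (lexUp_iff he hn).2 ⟨rfl, hmx, rfl⟩, ?_⟩
    rw [he2, chainOf_get, chainOf_get, Function.iterate_succ_apply' step i b]
  · rintro ⟨k, hk, x, y, hlex, rfl⟩
    obtain ⟨hwt, hmx, hy⟩ := (lexUp_iff he hn).1 hlex
    subst hy
    obtain ⟨b, i, hb, hi, hix⟩ := rep_exists he x
    have hiL : i < n - 2 * wt b := by
      rcases lt_or_eq_of_le hi with h | h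
      · exact h
      · exfalso
        apply top_unmatched he hb
        rw [← h, hix]
        exact hmx
    apply Set.mem_iUnion₂.2
    refine ⟨chainOf b, ⟨b, hb, rfl⟩, i, by rw [chainOf_length]; omega, ?_⟩
    rw [chainOf_get, chainOf_get, Function.iterate_succ_apply' step i b, hix]

end Lex1


/-- For any even `n ≥ 2`, the spanning subgraph of the `n`-cube with edge set
`⋃_{k=0}^{n−1} M^1_{n,k}` is a disjoint union of symmetric chains: there is a symmetric chain
decomposition of the `n`-cube whose chain edges are exactly the edges of the 1-lexical
matchings; consequently every connected component of this subgraph is a symmetric chain. -/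
theorem lexical1_is_SCD (n : ℕ) (hn : 2 ≤ n) (he : Even n) :
    ∃ D : Set (List (Fin n → Bool)), IsSCD n D ∧
      scdEdges D = {e : Sym2 (Fin n → Bool) |
        ∃ k < n, ∃ x y : Fin n → Bool, lexUp n k 1 x y ∧ e = s(x, y)} := by
  exact ⟨Lex1.Dscd n, Lex1.isSCD he, Lex1.edges_eq he (by omega)⟩
end

section
/- Let n ≥ 1 and let i = (i_0, …, i_{n−1}) and j = (j_0, …, j_{n−1}) be sequences of integers with 0 ≤ i_k ≤ max{k, n−k−1} and 0 ≤ j_k ≤ max{k, n−k−1} for each k. Then the edge sets ⋃_{k=0}^{n−1} M^{i_k}_{n,k} and ⋃_{k=0}^{n−1} M^{j_k}_{n,k} are disjoint if and only if i_k ≠ j_k for every k = 0, 1, …, n−1. -/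
lemma wt_flip {n : ℕ} (x : Fin n → Bool) (d : ℕ) (hd : d < n) (hx : x ⟨d, hd⟩ = false) :
    wt (fun t : Fin n => if t.val = d then true else x t) = wt x + 1 := by
  unfold wt
  have hset : (Finset.univ.filter fun i : Fin n => (if (i : ℕ) = d then true else x i) = true)
      = insert ⟨d, hd⟩ (Finset.univ.filter fun i : Fin n => x i = true) := by
    ext i
    simp only [Finset.mem_filter, Finset.mem_insert, Finset.mem_univ, true_and]
    constructor
    · intro h
      by_cases hi : (i : ℕ) = d
      · exact Or.inl (Fin.ext (by exact hi))
      · right; simpa [hi] using h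
    · rintro (rfl | h)
      · simp
    
      · have hi : (i : ℕ) ≠ d := by
          intro h'
          have : i = (⟨d, hd⟩ : Fin n) := Fin.ext h'
          rw [this, hx] at h; exact absurd h (by simp)
        simpa [hi] using h
  rw [hset, Finset.card_insert_of_notMem (by simp [hx])]

lemma lexUp_wt {n k i : ℕ} {x y : Fin n → Bool} (h : lexUp n k i x y) :
    wt x = k ∧ wt y = k + 1 := by
  obtain ⟨hw, d, hdn, hds, _, hy⟩ := h
  refine ⟨hw, ?_⟩
  rw [hy, wt_flip x d hdn (hds.2 hdn), hw]

lemma lexUp_eq {n k k' i i' : ℕ} {x y : Fin n → Bool}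
    (h : lexUp n k i x y) (h' : lexUp n k' i' x y) : k = k' ∧ i = i' := by
  obtain ⟨hw, d, hdn, hds, hc, hy⟩ := h
  obtain ⟨hw', d', hdn', hds', hc', hy'⟩ := h'
  have hk : k = k' := by rw [← hw, hw']
  have hdd : d = d' := by
    by_contra hne
    have h1 : y ⟨d, hdn⟩ = true := by rw [hy]; simp
    have h2 : y ⟨d, hdn⟩ = x ⟨d, hdn⟩ := by rw [hy']; simp [hne]
    rw [h2, hds.2 hdn] at h1
    exact absurd h1 (by simp)
  subst hdd
  exact ⟨hk, by rw [← hc, ← hc']⟩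
lemma card_filter_fin (n : ℕ) (p : ℕ → Prop) [DecidablePred p] :
    (Finset.univ.filter fun i : Fin n => p i.val).card
      = ((Finset.range n).filter p).card := by
  rw [Finset.card_filter, Finset.card_filter,
    Fin.sum_univ_eq_sum_range (fun t => if p t then 1 else 0)]

lemma onesUpTo_eq (n : ℕ) (p : ℕ → Prop) [DecidablePred p] (j : ℕ) :
    onesUpTo (fun t : Fin n => decide (p t.val)) j
      = ((Finset.range n).filter fun t => t < j ∧ p t).card := by
  unfold onesUpTo
  simp only [decide_eq_true_eq]
  exact card_filter_fin n (fun t => t < j ∧ p t)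

lemma wt_eq (n : ℕ) (p : ℕ → Prop) [DecidablePred p] :
    wt (fun t : Fin n => decide (p t.val)) = ((Finset.range n).filter p).card := by
  unfold wt
  simp only [decide_eq_true_eq]
  exact card_filter_fin n p


lemma exists_lexUp_1 (n k i : ℕ) (hk : k < n) (hi : i + k + 1 ≤ n) :
    ∃ x y : Fin n → Bool, lexUp n k i x y := by
  set x : Fin n → Bool := fun t => decide (t.val < k) with hxdef
  have hones : ∀ j, onesUpTo x j = min j k := by
    intro j
    rw [hxdef, onesUpTo_eq n (fun t => t < k) j]
    have : ((Finset.range n).filter fun t => t < j ∧ t < k) = Finset.range (min j k) := by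
      ext t; simp only [Finset.mem_filter, Finset.mem_range, lt_min_iff]; omega
    rw [this, Finset.card_range]
  have hwt : wt x = k := by
    rw [hxdef, wt_eq n (fun t => t < k)]
    have : ((Finset.range n).filter fun t => t < k) = Finset.range k := by
      ext t; simp only [Finset.mem_filter, Finset.mem_range]; omega
    rw [this, Finset.card_range]
  have hext : extLen x = max n (2 * k + 1) := by rw [extLen, hwt]
  have hds : ∀ j, isDownStep x j ↔ (k ≤ j ∧ j < max n (2 * k + 1)) := by
    intro j
    rw [isDownStep, hext]
    constructor
    · rintro ⟨h1, h2⟩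
      refine ⟨?_, h1⟩
      by_cases hj : j < n
      · have := h2 hj; simp only [hxdef, decide_eq_false_iff_not, not_lt] at this; exact this
      · omega
    · rintro ⟨h1, h2⟩
      exact ⟨h2, fun hj => by simp only [hxdef, decide_eq_false_iff_not, not_lt]; exact h1⟩
  have hhgt : ∀ j, hgt x j = 2 * (min j k : ℤ) - j := by
    intro j; rw [hgt, hones]; push_cast; ring
  refine ⟨x, _, hwt, k + i, by omega, ?_, ?_, rfl⟩
  · rw [hds]; constructor <;> omega
  · have hS : {j : ℕ | isDownStep x j ∧
        (hgt x (k + i) < hgt x j ∨ (hgt x j = hgt x (k + i) ∧ k + i < j))}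
        = Set.Ico k (k + i) := by
      ext j
      simp only [Set.mem_setOf_eq, Set.mem_Ico, hds, hhgt]
      omega
    rw [hS, ← Finset.coe_Ico, Set.ncard_coe_finset, Nat.card_Ico]
    omega

lemma exists_lexUp_2 (n k i : ℕ) (hk : k < n) (h1 : 1 ≤ i) (h2 : i ≤ k) (h3 : n ≤ k + i) :
    ∃ x y : Fin n → Bool, lexUp n k i x y := by
  set m := k - i with hm
  have hmk : m + i = k := by omega
  set x : Fin n → Bool := fun t => decide (t.val ≠ m ∧ t.val ≤ k) with hxdef
  have hones : ∀ j, onesUpTo x j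
      = ((Finset.range n).filter fun t => t < j ∧ (t ≠ m ∧ t ≤ k)).card := by
    intro j; rw [hxdef]; exact onesUpTo_eq n (fun t => t ≠ m ∧ t ≤ k) j
  have honm : onesUpTo x m = m := by
    rw [hones]
    have : ((Finset.range n).filter fun t => t < m ∧ (t ≠ m ∧ t ≤ k)) = Finset.range m := by
      ext t; simp only [Finset.mem_filter, Finset.mem_range]; omega
    rw [this, Finset.card_range]
  have honk : ∀ j, k + 1 ≤ j → onesUpTo x j = k := by
    intro j hj
    rw [hones]
    have : ((Finset.range n).filter fun t => t < j ∧ (t ≠ m ∧ t ≤ k))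
        = (Finset.range (k + 1)).erase m := by
      ext t
      simp only [Finset.mem_filter, Finset.mem_range, Finset.mem_erase]
      omega
    rw [this, Finset.card_erase_of_mem (by simp only [Finset.mem_range]; omega),
      Finset.card_range]
    omega
  have hwt : wt x = k := by
    rw [hxdef, wt_eq n (fun t => t ≠ m ∧ t ≤ k)]
    have : ((Finset.range n).filter fun t => t ≠ m ∧ t ≤ k)
        = (Finset.range (k + 1)).erase m := by
      ext t
      simp only [Finset.mem_filter, Finset.mem_range, Finset.mem_erase]
      omega
    rw [this, Finset.card_erase_of_mem (by simp only [Finset.mem_range]; omega),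
      Finset.card_range]
    omega
  have hext : extLen x = 2 * k + 1 := by rw [extLen, hwt]; omega
  have hds : ∀ j, isDownStep x j ↔ (j = m ∨ (k + 1 ≤ j ∧ j < 2 * k + 1)) := by
    intro j
    rw [isDownStep, hext]
    constructor
    · rintro ⟨hj1, hj2⟩
      by_cases hj : j < n
      · have := hj2 hj
        simp only [hxdef, decide_eq_false_iff_not, not_and, not_le] at this
        by_cases hjm : j = m
        · exact Or.inl hjm
        · have := this hjm; omega
      · omega
    · rintro (rfl | ⟨hj1, hj2⟩)
      · exact ⟨by omega, fun hj => by
          simp only [hxdef, decide_eq_false_iff_not, not_and, not_le]; omega⟩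
      · exact ⟨by omega, fun hj => by
          simp only [hxdef, decide_eq_false_iff_not, not_and, not_le]; omega⟩
  have hhm : hgt x m = (m : ℤ) := by rw [hgt, honm]; ring
  have hhk : ∀ j, k + 1 ≤ j → hgt x j = 2 * (k : ℤ) - j := by
    intro j hj; rw [hgt, honk j hj]
  refine ⟨x, _, hwt, m, by omega, ?_, ?_, rfl⟩
  · rw [hds]; omega
  · have hS : {j : ℕ | isDownStep x j ∧
        (hgt x m < hgt x j ∨ (hgt x j = hgt x m ∧ m < j))}
        = Set.Ico (k + 1) (k + i + 1) := by
      ext j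
      simp only [Set.mem_setOf_eq, Set.mem_Ico, hds, hhm]
      constructor
      · rintro ⟨(rfl | ⟨hj1, hj2⟩), hcond⟩
        · omega
        · rw [hhk j hj1] at hcond; omega
      · intro hj
        have hj1 : k + 1 ≤ j := hj.1
        rw [hhk j hj1]
        refine ⟨Or.inr ⟨hj1, by omega⟩, ?_⟩
        omega
    rw [hS, ← Finset.coe_Ico, Set.ncard_coe_finset, Nat.card_Ico]
    omega

lemma exists_lexUp (n k i : ℕ) (hk : k < n) (hi : i ≤ max k (n - k - 1)) :
    ∃ x y : Fin n → Bool, lexUp n k i x y := by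
  by_cases h : i + k + 1 ≤ n
  · exact exists_lexUp_1 n k i hk h
  · exact exists_lexUp_2 n k i hk (by omega) (by omega) (by omega)


/-- For sequences `i` and `j` with `0 ≤ i_k, j_k ≤ max{k, n−k−1}`, the edge sets
`⋃_{k=0}^{n−1} M^{i_k}_{n,k}` and `⋃_{k=0}^{n−1} M^{j_k}_{n,k}` are disjoint if and only if
`i_k ≠ j_k` for every `k`. -/
theorem lexical_unions_disjoint_iff (n : ℕ) (hn : 1 ≤ n) (iv jv : Fin n → ℕ)
    (hbi : ∀ k : Fin n, iv k ≤ max k.val (n - k.val - 1))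
    (hbj : ∀ k : Fin n, jv k ≤ max k.val (n - k.val - 1)) :
    Disjoint
      {e : Sym2 (Fin n → Bool) |
        ∃ (k : Fin n) (x y : Fin n → Bool), lexUp n k.val (iv k) x y ∧ e = s(x, y)}
      {e : Sym2 (Fin n → Bool) |
        ∃ (k : Fin n) (x y : Fin n → Bool), lexUp n k.val (jv k) x y ∧ e = s(x, y)}
    ↔ ∀ k : Fin n, iv k ≠ jv k := by
  constructor
  · intro hdisj k
    intro heq
    obtain ⟨x, y, hxy⟩ := exists_lexUp n k.val (iv k) k.isLt (hbi k)
    have h1 : s(x, y) ∈ {e : Sym2 (Fin n → Bool) |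
        ∃ (k : Fin n) (x y : Fin n → Bool), lexUp n k.val (iv k) x y ∧ e = s(x, y)} :=
      ⟨k, x, y, hxy, rfl⟩
    have h2 : s(x, y) ∈ {e : Sym2 (Fin n → Bool) |
        ∃ (k : Fin n) (x y : Fin n → Bool), lexUp n k.val (jv k) x y ∧ e = s(x, y)} :=
      ⟨k, x, y, heq ▸ hxy, rfl⟩
    exact Set.disjoint_left.mp hdisj h1 h2
  · intro hne
    rw [Set.disjoint_left]
    rintro e ⟨k, x, y, hxy, rfl⟩ ⟨k', x', y', hxy', he⟩
    rw [Sym2.eq_iff] at he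
    rcases he with ⟨hx, hy⟩ | ⟨hx, hy⟩
    · subst hx; subst hy
      obtain ⟨hk, hi⟩ := lexUp_eq hxy hxy'
      have : k = k' := Fin.ext hk
      subst this
      exact hne k (hi)
    · subst hx; subst hy
      obtain ⟨ha, hb⟩ := lexUp_wt hxy
      obtain ⟨hc, hd⟩ := lexUp_wt hxy'
      omega
end
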